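/- arXiv:2302.09613 — 3 statements merged into one kernel-verified Lean document; each statement's English description precedes it below -/
import Mathlib

section
/- Let α > −1, let f* : ℝ → ℂ be continuous, 2π-periodic with |f*(t)| ≤ 1 for all t, and let f = P_α[f*]. Then for every z ∈ 𝔻, |f(z) − ((1−|z|²)/(1+|z|²))·G_α(z)| ≤ (4/π) · (sup_{0≤θ≤2π} |g_α(|z| e^{iθ})|) · arctan|z|. In particular, if α ≥ 0 the right-hand side is at most (2^{α+2}/π)·arctan|z|, and if −1 < α < 0 it is at most (4/π)·(1−|z|)^α·arctan|z|. -/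
open Complex MeasureTheory Real Set

noncomputable section

/-- Wirtinger derivative `∂f = (f_x - i f_y)/2` of a function `f : ℂ → ℂ`,
viewed as a real-differentiable map. -/
def wdz (f : ℂ → ℂ) (z : ℂ) : ℂ :=
  (fderiv ℝ f z 1 - Complex.I * fderiv ℝ f z Complex.I) / 2

/-- Wirtinger derivative `∂̄f = (f_x + i f_y)/2`. -/
def wdzbar (f : ℂ → ℂ) (z : ℂ) : ℂ :=
  (fderiv ℝ f z 1 + Complex.I * fderiv ℝ f z Complex.I) / 2

/-- The `α`-harmonic Poisson kernel
`P_α(z) = (1-|z|²)^{α+1} / ((1-z)(1-z̄)^{α+1})` (principal powers). -/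
def poissonKernelAlpha (α : ℝ) (z : ℂ) : ℂ :=
  (((1 - ‖z‖ ^ 2) ^ (α + 1) : ℝ) : ℂ) /
    ((1 - z) * (1 - (starRingEnd ℂ) z) ^ ((α : ℂ) + 1))

/-- The `α`-harmonic extension `P_α[F](z) = (1/2π) ∫₀^{2π} P_α(z e^{-it}) F(t) dt`. -/
def poissonExt (α : ℝ) (F : ℝ → ℂ) (z : ℂ) : ℂ :=
  (1 / (2 * Real.pi) : ℂ) *
    ∫ t in (0:ℝ)..(2 * Real.pi), poissonKernelAlpha α (z * Complex.exp (-Complex.I * t)) * F t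

/-- The angular derivative `∂_θ f(z) = i (z ∂f(z) - z̄ ∂̄f(z))`. -/
def angularDeriv (f : ℂ → ℂ) (z : ℂ) : ℂ :=
  Complex.I * (z * wdz f z - (starRingEnd ℂ) z * wdzbar f z)

/-- The integral mean `M_p(r,g) = ((1/2π) ∫₀^{2π} |g(r e^{iθ})|^p dθ)^{1/p}`. -/
def Mp (p : ℝ) (r : ℝ) (g : ℂ → ℂ) : ℝ :=
  ((1 / (2 * Real.pi)) *
      ∫ θ in (0:ℝ)..(2 * Real.pi),
        ‖g ((r : ℂ) * Complex.exp (Complex.I * θ))‖ ^ p) ^ (1 / p)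

/-- The boundary `L^p` norm `‖G‖_{L^p} = ((1/2π) ∫₀^{2π} |G(t)|^p dt)^{1/p}`. -/
def lpNormBdry (p : ℝ) (G : ℝ → ℂ) : ℝ :=
  ((1 / (2 * Real.pi)) * ∫ t in (0:ℝ)..(2 * Real.pi), ‖G t‖ ^ p) ^ (1 / p)

/-- The constant `c_α = Γ(α+1)/Γ(α/2+1)²`. -/
def cAlpha (α : ℝ) : ℝ := Real.Gamma (α + 1) / (Real.Gamma (α / 2 + 1)) ^ 2

/-- `I_α(r) = (1/2π) ∫₀^{2π} (1-r²)^α / |1 - r e^{it}|^{α+1} dt`. -/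
def Ialpha (α r : ℝ) : ℝ :=
  (1 / (2 * Real.pi)) *
    ∫ t in (0:ℝ)..(2 * Real.pi),
      (1 - r ^ 2) ^ α / (‖1 - (r : ℂ) * Complex.exp (Complex.I * t)‖) ^ (α + 1)

/-- `g_α(z) = ((1-|z|²)/(1-z̄))^α` (principal complex power). -/
def gAlpha (α : ℝ) (z : ℂ) : ℂ :=
  ((((1 - ‖z‖ ^ 2 : ℝ)) : ℂ) / (1 - (starRingEnd ℂ) z)) ^ (α : ℂ)

end

/-! ### Auxiliary lemmas -/

section Aux

lemma st_denom_pos {ρ : ℝ} (h1 : -1 < ρ) (h2 : ρ < 1) (s : ℝ) :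
    0 < 1 - 2*ρ*Real.cos s + ρ^2 := by
  have hc1 : Real.cos s ≤ 1 := Real.cos_le_one s
  have hc2 : -1 ≤ Real.cos s := Real.neg_one_le_cos s
  rcases le_or_gt 0 ρ with hρ | hρ
  · nlinarith [mul_nonneg hρ (by linarith : 0 ≤ 1 - Real.cos s), sq_nonneg (1-ρ)]
  · nlinarith [mul_nonneg (by linarith : (0:ℝ) ≤ -ρ) (by linarith : 0 ≤ 1 + Real.cos s), sq_nonneg (1+ρ)]

private lemma st_aux_alg {ρ s : ℝ} (h1 : -1 < ρ) (h2 : ρ < 1)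
    (hd : 0 < 1 - 2*ρ*(2*Real.cos (s/2)^2-1) + ρ^2)
    (hX : 0 < Real.cos (s/2)^2 + ((1+ρ)/(1-ρ))^2*(1-Real.cos (s/2)^2)) :
    (1-ρ^2)/(1 - 2*ρ*(2*Real.cos (s/2)^2-1) + ρ^2)
      = ((1+ρ)/(1-ρ))/(Real.cos (s/2)^2 + ((1+ρ)/(1-ρ))^2*(1-Real.cos (s/2)^2)) := by
  have hne : (1:ℝ) - ρ ≠ 0 := by intro h; nlinarith
  rw [div_eq_div_iff hd.ne' hX.ne']
  field_simp
  ring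

private lemma st_aux_alg2 {k c σ : ℝ} (hc : c ≠ 0) :
    2 * ((1/(1 + (k*(σ/c))^2)) * (k * (1/c^2 * (1/2)))) = k / (c^2 + k^2 * σ^2) := by
  have h1x : (1 + (k*(σ/c))^2) ≠ 0 := by positivity
  have hX : c^2 + k^2*σ^2 ≠ 0 := by positivity
  field_simp

lemma st_integral_Q {ρ : ℝ} (h1 : -1 < ρ) (h2 : ρ < 1) :
    ∫ s in (-(π/2))..(π/2), (1-ρ^2)/(1 - 2*ρ*Real.cos s + ρ^2)
      = 4 * Real.arctan ((1+ρ)/(1-ρ)) := by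
  have hρ1 : (0:ℝ) < 1 - ρ := by linarith
  have hkpos : 0 < (1+ρ)/(1-ρ) := div_pos (by linarith) hρ1
  have hF : ∀ s ∈ Set.uIcc (-(π/2)) (π/2),
      HasDerivAt (fun x => 2 * Real.arctan ((1+ρ)/(1-ρ) * Real.tan (x/2)))
        ((1-ρ^2)/(1 - 2*ρ*Real.cos s + ρ^2)) s := by
    intro s hs
    rw [Set.uIcc_of_le (by linarith [Real.pi_pos]) ] at hs
    have hs1 : -(π/2) ≤ s := hs.1
    have hs2 : s ≤ π/2 := hs.2
    have hcpos : 0 < Real.cos (s/2) :=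
      Real.cos_pos_of_mem_Ioo ⟨by linarith [Real.pi_pos], by linarith [Real.pi_pos]⟩
    have hcos : Real.cos (s/2) ≠ 0 := ne_of_gt hcpos
    have htan : HasDerivAt (fun x : ℝ => Real.tan (x/2)) (1/Real.cos (s/2)^2 * (1/2)) s := by
      have h1' := Real.hasDerivAt_tan hcos
      have h2' : HasDerivAt (fun x : ℝ => x/2) (1/2) s := (hasDerivAt_id s).div_const 2
      exact h1'.comp s h2'
    have harc : HasDerivAt (fun x => 2 * Real.arctan ((1+ρ)/(1-ρ) * Real.tan (x/2)))
        (2 * ((1/(1 + ((1+ρ)/(1-ρ)*Real.tan (s/2))^2)) * ((1+ρ)/(1-ρ) * (1/Real.cos (s/2)^2 * (1/2))))) s := by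
      have := (Real.hasDerivAt_arctan ((1+ρ)/(1-ρ) * Real.tan (s/2))).comp s
        ((htan.const_mul ((1+ρ)/(1-ρ))))
      exact this.const_mul 2
    convert harc using 1
    have hσ2 : Real.sin (s/2)^2 = 1 - Real.cos (s/2)^2 := by
      nlinarith [Real.sin_sq_add_cos_sq (s/2)]
    have hcs : Real.cos s = 2*Real.cos (s/2)^2 - 1 := by
      have h := Real.cos_sq (s/2)
      rw [show 2*(s/2) = s by ring] at h
      linarith
    rw [Real.tan_eq_sin_div_cos, st_aux_alg2 hcos, hσ2, hcs]
    have hd := st_denom_pos h1 h2 s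
    rw [hcs] at hd
    have hX : 0 < Real.cos (s/2)^2 + ((1+ρ)/(1-ρ))^2*(1-Real.cos (s/2)^2) := by
      have h' := sq_nonneg (Real.sin (s/2))
      rw [hσ2] at h'
      exact add_pos_of_pos_of_nonneg (by positivity) (mul_nonneg (sq_nonneg _) h')
    exact st_aux_alg h1 h2 hd hX
  have hInt : IntervalIntegrable (fun s => (1-ρ^2)/(1 - 2*ρ*Real.cos s + ρ^2))
      MeasureSpace.volume (-(π/2)) (π/2) := by
    apply Continuous.intervalIntegrable
    exact continuous_const.div (by continuity) (fun s => ne_of_gt (st_denom_pos h1 h2 s))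
  rw [intervalIntegral.integral_eq_sub_of_hasDerivAt hF hInt]
  rw [show (π/2)/2 = π/4 by ring, show (-(π/2))/2 = -(π/4) by ring]
  rw [Real.tan_neg, Real.tan_pi_div_four]
  rw [mul_one, mul_neg_one, Real.arctan_neg]
  ring

lemma st_key_integral {r : ℝ} (h0 : 0 ≤ r) (h1 : r < 1) :
    ∫ s in (-(π/2))..(3*π/2),
      |(1-r^2)/(1 - 2*r*Real.cos s + r^2) - (1-r^2)/(1+r^2)|
      = 8 * Real.arctan r := by
  have h1' : -1 < r := by linarith
  have hc : (0:ℝ) < 1 + r^2 := by positivity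
  have hcontq : Continuous (fun s => (1-r^2)/(1 - 2*r*Real.cos s + r^2)) :=
    continuous_const.div (by continuity) (fun s => ne_of_gt (st_denom_pos h1' h1 s))
  have hcontF : Continuous (fun s => |(1-r^2)/(1 - 2*r*Real.cos s + r^2) - (1-r^2)/(1+r^2)|) :=
    (hcontq.sub continuous_const).abs
  have hsplit : ∫ s in (-(π/2))..(3*π/2),
        |(1-r^2)/(1 - 2*r*Real.cos s + r^2) - (1-r^2)/(1+r^2)|
      = (∫ s in (-(π/2))..(π/2), |(1-r^2)/(1 - 2*r*Real.cos s + r^2) - (1-r^2)/(1+r^2)|)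
        + ∫ s in (π/2)..(3*π/2), |(1-r^2)/(1 - 2*r*Real.cos s + r^2) - (1-r^2)/(1+r^2)| :=
    (intervalIntegral.integral_add_adjacent_intervals
      (hcontF.intervalIntegrable _ _) (hcontF.intervalIntegrable _ _)).symm
  rw [hsplit]
  have e1 : ∫ s in (-(π/2))..(π/2),
        |(1-r^2)/(1 - 2*r*Real.cos s + r^2) - (1-r^2)/(1+r^2)|
      = ∫ s in (-(π/2))..(π/2),
        ((1-r^2)/(1 - 2*r*Real.cos s + r^2) - (1-r^2)/(1+r^2)) := by
    apply intervalIntegral.integral_congr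
    intro s hs
    rw [Set.uIcc_of_le (by linarith [Real.pi_pos])] at hs
    apply _root_.abs_of_nonneg
    have hcos : 0 ≤ Real.cos s := Real.cos_nonneg_of_mem_Icc ⟨hs.1, hs.2⟩
    have hD : 1 - 2*r*Real.cos s + r^2 ≤ 1 + r^2 := by nlinarith [mul_nonneg h0 hcos]
    have := div_le_div_of_nonneg_left (by nlinarith : (0:ℝ) ≤ 1-r^2) (st_denom_pos h1' h1 s) hD
    linarith
  have e2 : ∫ s in (π/2)..(3*π/2),
        |(1-r^2)/(1 - 2*r*Real.cos s + r^2) - (1-r^2)/(1+r^2)|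
      = ∫ s in (π/2)..(3*π/2),
        ((1-r^2)/(1+r^2) - (1-r^2)/(1 - 2*r*Real.cos s + r^2)) := by
    apply intervalIntegral.integral_congr
    intro s hs
    rw [Set.uIcc_of_le (by linarith [Real.pi_pos])] at hs
    dsimp only
    rw [abs_sub_comm]
    apply _root_.abs_of_nonneg
    have hcos : Real.cos s ≤ 0 :=
      Real.cos_nonpos_of_pi_div_two_le_of_le hs.1 (by linarith [hs.2])
    have hD : 1 + r^2 ≤ 1 - 2*r*Real.cos s + r^2 := by nlinarith [mul_nonneg h0 (neg_nonneg.mpr hcos)]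
    have := div_le_div_of_nonneg_left (by nlinarith : (0:ℝ) ≤ 1-r^2) hc hD
    linarith
  rw [e1, e2]
  rw [intervalIntegral.integral_sub (hcontq.intervalIntegrable _ _)
    (intervalIntegrable_const), intervalIntegral.integral_sub
    (intervalIntegrable_const) (hcontq.intervalIntegrable _ _)]
  rw [intervalIntegral.integral_const, intervalIntegral.integral_const]
  have eshift : ∫ s in (π/2)..(3*π/2), (1-r^2)/(1 - 2*r*Real.cos s + r^2)
      = ∫ s in (-(π/2))..(π/2), (1-r^2)/(1 - 2*(-r)*Real.cos s + (-r)^2) := by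
    have := intervalIntegral.integral_comp_add_right (a := -(π/2)) (b := π/2)
      (fun s => (1-r^2)/(1 - 2*r*Real.cos s + r^2)) π
    rw [show -(π/2) + π = π/2 by ring, show π/2 + π = 3*π/2 by ring] at this
    rw [← this]
    apply intervalIntegral.integral_congr
    intro s _
    dsimp only
    rw [Real.cos_add_pi]
    ring_nf
  rw [eshift]
  have q1 := st_integral_Q h1' h1
  have q2 := st_integral_Q (show -1 < -r by linarith) (show -r < 1 by linarith)
  rw [show (1:ℝ)-(-r)^2 = 1-r^2 by ring] at q2
  rw [q1, q2]
  have harct1 : Real.arctan ((1+r)/(1-r)) = π/4 + Real.arctan r := by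
    have h := Real.arctan_add (x := 1) (y := r) (by nlinarith)
    rw [Real.arctan_one] at h
    rw [show (1+r)/(1-1*r) = (1+r)/(1-r) by ring_nf] at h
    linarith
  have harct2 : Real.arctan ((1+(-r))/(1-(-r))) = π/2 - (π/4 + Real.arctan r) := by
    rw [show (1+(-r))/(1-(-r)) = ((1+r)/(1-r))⁻¹ by rw [inv_div]; ring]
    rw [Real.arctan_inv_of_pos (div_pos (by linarith) (by linarith)), harct1]
  rw [harct1, harct2]
  simp only [smul_eq_mul]
  ring

lemma st_v_re_pos {w : ℂ} (hw : ‖w‖ < 1) : 0 < (1 - (starRingEnd ℂ) w).re := by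
  have h1 : (starRingEnd ℂ w).re = w.re := Complex.conj_re w
  have h2 : w.re ≤ ‖w‖ := Complex.re_le_norm w
  simp only [Complex.sub_re, Complex.one_re, h1]
  linarith

lemma st_v_ne_zero {w : ℂ} (hw : ‖w‖ < 1) : (1 - (starRingEnd ℂ) w) ≠ 0 := by
  intro h
  have := st_v_re_pos hw
  rw [h] at this
  simp at this

lemma st_v_arg_ne_pi {w : ℂ} (hw : ‖w‖ < 1) : (1 - (starRingEnd ℂ) w).arg ≠ π := by
  intro h
  rw [Complex.arg_eq_pi_iff] at h
  linarith [st_v_re_pos hw, h.1]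

lemma st_one_sub_ne_zero {w : ℂ} (hw : ‖w‖ < 1) : (1 - w) ≠ 0 := by
  intro h
  have : w = 1 := by linear_combination -h
  rw [this] at hw
  simp at hw

lemma st_x_pos {w : ℂ} (hw : ‖w‖ < 1) : 0 < 1 - ‖w‖ ^ 2 := by
  nlinarith [norm_nonneg w]

lemma st_gAlpha_eq {w : ℂ} (hw : ‖w‖ < 1) (α : ℝ) :
    gAlpha α w = (((1 - ‖w‖ ^ 2) ^ α : ℝ) : ℂ) /
      (1 - (starRingEnd ℂ) w) ^ (α : ℂ) := by
  set x : ℝ := 1 - ‖w‖ ^ 2 with hxdef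
  set v : ℂ := 1 - (starRingEnd ℂ) w with hvdef
  have hx : 0 < x := st_x_pos hw
  have hv : v ≠ 0 := st_v_ne_zero hw
  have hbase : ((x : ℂ) / v) ≠ 0 := by
    apply div_ne_zero _ hv
    exact_mod_cast ne_of_gt hx
  rw [gAlpha]
  rw [Complex.cpow_def_of_ne_zero hbase]
  rw [div_eq_mul_inv, Complex.log_ofReal_mul hx (inv_ne_zero hv)]
  rw [Complex.log_inv _ (st_v_arg_ne_pi hw)]
  rw [Complex.ofReal_cpow hx.le]
  rw [Complex.cpow_def_of_ne_zero (by exact_mod_cast ne_of_gt hx : (x:ℂ) ≠ 0)]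
  rw [Complex.cpow_def_of_ne_zero hv]
  rw [Complex.ofReal_log hx.le]
  rw [show (Complex.log (x:ℂ) + -Complex.log v)*(α:ℂ)
      = Complex.log (x:ℂ)*α - Complex.log v*α by ring]
  rw [Complex.exp_sub]

lemma st_cpow_ne_zero {v : ℂ} (hv : v ≠ 0) (α : ℝ) : v ^ (α : ℂ) ≠ 0 := by
  simp [Complex.cpow_eq_zero_iff, hv]

lemma st_kernel_factor (α : ℝ) {w : ℂ} (hw : ‖w‖ < 1) :
    poissonKernelAlpha α w
      = (((1 - ‖w‖ ^ 2) / ‖(1 - w)‖ ^ 2 : ℝ) : ℂ) * gAlpha α w := by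
  have hx : 0 < 1 - ‖w‖ ^ 2 := st_x_pos hw
  have hv : (1 - (starRingEnd ℂ) w) ≠ 0 := st_v_ne_zero hw
  have h1w : (1 - w) ≠ 0 := st_one_sub_ne_zero hw
  have habs : ‖(1 - w)‖ ≠ 0 := norm_ne_zero_iff.mpr h1w
  have hconj : (starRingEnd ℂ) (1 - w) = 1 - (starRingEnd ℂ) w := by
    rw [map_sub, map_one]
  have hmulconj : (1 - w) * (1 - (starRingEnd ℂ) w) = ((‖(1 - w)‖ ^ 2 : ℝ) : ℂ) := by
    rw [← hconj, Complex.mul_conj, Complex.sq_norm]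
  rw [poissonKernelAlpha, st_gAlpha_eq hw]
  rw [Real.rpow_add hx α 1, Real.rpow_one]
  rw [Complex.cpow_add _ _ hv, Complex.cpow_one]
  have hvα : (1 - (starRingEnd ℂ) w) ^ (α : ℂ) ≠ 0 := st_cpow_ne_zero hv α
  rw [show (1 - w) * ((1 - (starRingEnd ℂ) w) ^ (α:ℂ) * (1 - (starRingEnd ℂ) w))
      = ((1 - w) * (1 - (starRingEnd ℂ) w)) * (1 - (starRingEnd ℂ) w) ^ (α:ℂ) by ring]
  rw [hmulconj]
  have habs2 : ((‖(1 - w)‖ ^ 2 : ℝ) : ℂ) ≠ 0 := by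
    exact_mod_cast pow_ne_zero 2 habs
  push_cast
  field_simp

lemma st_abs_one_sub_exp (r s : ℝ) :
    ‖(1 - (r:ℂ) * Complex.exp ((s:ℂ) * Complex.I))‖ ^ 2
      = 1 - 2*r*Real.cos s + r^2 := by
  rw [Complex.sq_norm, Complex.normSq_apply, Complex.exp_mul_I]
  simp [Complex.cos_ofReal_re, Complex.sin_ofReal_re]
  linear_combination (r^2) * (Real.sin_sq_add_cos_sq s)

lemma st_abs_gAlpha_le {α r : ℝ} (h0 : 0 ≤ r) (h1 : r < 1) {w : ℂ}
    (hw : ‖w‖ = r) :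
    (0 ≤ α → ‖(gAlpha α w)‖ ≤ (1+r) ^ α) ∧
    (α ≤ 0 → ‖(gAlpha α w)‖ ≤ (1-r) ^ α) := by
  have hw1 : ‖w‖ < 1 := by rw [hw]; exact h1
  have hx : 0 < 1 - ‖w‖ ^ 2 := st_x_pos hw1
  have habs : ‖(gAlpha α w)‖
      = ‖((((1 - ‖w‖ ^ 2 : ℝ)) : ℂ) / (1 - (starRingEnd ℂ) w))‖ ^ α := by
    rw [gAlpha, Complex.norm_cpow_real]
  have hA1 : 1 - r ≤ ‖(1 - (starRingEnd ℂ) w)‖ := by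
    have h := norm_sub_norm_le (1 : ℂ) ((starRingEnd ℂ) w)
    simp only [map_one, Complex.norm_conj, hw] at h
    simpa using h
  have hA2 : ‖(1 - (starRingEnd ℂ) w)‖ ≤ 1 + r := by
    have h := norm_sub_le (1 : ℂ) ((starRingEnd ℂ) w)
    simp only [norm_one, Complex.norm_conj, hw] at h
    simpa using h
  have hApos : 0 < ‖(1 - (starRingEnd ℂ) w)‖ := by linarith
  have hm : ‖((((1 - ‖w‖ ^ 2 : ℝ)) : ℂ) / (1 - (starRingEnd ℂ) w))‖
      = (1 - r^2) / ‖(1 - (starRingEnd ℂ) w)‖ := by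
    rw [norm_div, Complex.norm_real, Real.norm_eq_abs, _root_.abs_of_pos hx, hw]
  have hub : (1 - r^2) / ‖(1 - (starRingEnd ℂ) w)‖ ≤ 1 + r := by
    rw [div_le_iff₀ hApos]
    nlinarith
  have hlb : 1 - r ≤ (1 - r^2) / ‖(1 - (starRingEnd ℂ) w)‖ := by
    rw [le_div_iff₀ hApos]
    nlinarith
  have hmnn : 0 ≤ (1 - r^2) / ‖(1 - (starRingEnd ℂ) w)‖ :=
    div_nonneg (by nlinarith) hApos.le
  constructor
  · intro hα
    rw [habs, hm]
    exact Real.rpow_le_rpow hmnn hub hα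
  · intro hα
    rw [habs, hm]
    exact Real.rpow_le_rpow_of_nonpos (by linarith) hlb hα

lemma st_u_re_pos {w : ℂ} (hw : ‖w‖ < 1) :
    0 < ((((1 - ‖w‖ ^ 2 : ℝ)) : ℂ) / (1 - (starRingEnd ℂ) w)).re := by
  rw [div_eq_mul_inv, Complex.re_ofReal_mul]
  apply mul_pos (st_x_pos hw)
  rw [Complex.inv_re]
  exact div_pos (st_v_re_pos hw) (Complex.normSq_pos.mpr (st_v_ne_zero hw))

lemma st_abs_w (z : ℂ) (t : ℝ) :
    ‖(z * Complex.exp (-Complex.I * t))‖ = ‖z‖ := by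
  rw [norm_mul, Complex.norm_exp]
  simp

lemma st_cont_gA (α : ℝ) {z : ℂ} (hz : ‖z‖ < 1) :
    Continuous fun t : ℝ => gAlpha α (z * Complex.exp (-Complex.I * t)) := by
  have hW : Continuous fun t : ℝ => z * Complex.exp (-Complex.I * t) :=
    continuous_const.mul (Complex.continuous_exp.comp (continuous_const.mul Complex.continuous_ofReal))
  refine continuous_iff_continuousAt.mpr fun t => ?_
  have hw : ‖(z * Complex.exp (-Complex.I * t))‖ < 1 := by
    rw [st_abs_w]; exact hz
  unfold gAlpha
  have hf : ContinuousAt (fun s : ℝ =>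
      ((((1 - ‖(z * Complex.exp (-Complex.I * s))‖ ^ 2 : ℝ)) : ℂ) /
        (1 - (starRingEnd ℂ) (z * Complex.exp (-Complex.I * s))))) t := by
    apply ContinuousAt.div
    · exact (Complex.continuous_ofReal.comp
        (continuous_const.sub ((continuous_norm.comp hW).pow 2))).continuousAt
    · exact (continuous_const.sub (Complex.continuous_conj.comp hW)).continuousAt
    · exact st_v_ne_zero hw
  exact hf.cpow continuousAt_const (Or.inl (st_u_re_pos hw))

end Aux

section Core

set_option maxHeartbeats 1000000 in
lemma st_core (α : ℝ) (fs : ℝ → ℂ) (hcont : Continuous fs)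
    (hbd : ∀ t : ℝ, ‖(fs t)‖ ≤ 1) {z : ℂ} (hz : ‖z‖ < 1) :
    ‖(poissonExt α fs z -
        ((((1 - ‖z‖ ^ 2) / (1 + ‖z‖ ^ 2) : ℝ)) : ℂ) *
          ((1 / (2 * Real.pi) : ℂ) *
            ∫ t in (0:ℝ)..(2 * Real.pi), gAlpha α (z * Complex.exp (-Complex.I * t)) * fs t))‖ ≤
      4 / Real.pi *
          (⨆ θ : Set.Icc (0:ℝ) (2 * Real.pi),
            ‖(gAlpha α (((‖z‖ : ℝ) : ℂ) * Complex.exp (Complex.I * (θ : ℝ))))‖) *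
        Real.arctan (‖z‖) := by
  have hr0 : 0 ≤ ‖z‖ := norm_nonneg z
  have hr1 : ‖z‖ < 1 := hz
  have h1' : -1 < ‖z‖ := by linarith
  set R := ‖z‖ with hR
  set q : ℝ → ℝ := fun t => (1 - R^2)/(1 - 2*R*Real.cos (z.arg - t) + R^2) with hqdef
  set c : ℝ := (1 - R^2)/(1 + R^2) with hcdef
  set S := ⨆ θ : Set.Icc (0:ℝ) (2 * Real.pi),
      ‖(gAlpha α (((R : ℝ) : ℂ) * Complex.exp (Complex.I * (θ : ℝ))))‖ with hSdef
  -- pointwise kernel factorization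
  have hw_eq : ∀ t : ℝ, z * Complex.exp (-Complex.I * t)
      = ((R : ℝ) : ℂ) * Complex.exp (((z.arg - t : ℝ) : ℂ) * Complex.I) := by
    intro t
    conv_lhs => rw [← Complex.norm_mul_exp_arg_mul_I z]
    rw [mul_assoc, ← Complex.exp_add]
    congr 2
    push_cast
    ring
  have habsw : ∀ t : ℝ, ‖(z * Complex.exp (-Complex.I * t))‖ = R := st_abs_w z
  have hker : ∀ t : ℝ, poissonKernelAlpha α (z * Complex.exp (-Complex.I * t))
      = ((q t : ℝ) : ℂ) * gAlpha α (z * Complex.exp (-Complex.I * t)) := by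
    intro t
    rw [st_kernel_factor α (by rw [habsw t]; exact hz)]
    congr 2
    rw [habsw t, hw_eq t, st_abs_one_sub_exp]
  -- sup bounds
  have hSub : ∀ θ : ℝ, ‖(gAlpha α (((R : ℝ) : ℂ) * Complex.exp (Complex.I * θ)))‖
      ≤ (1 - R)^α + (1 + R)^α := by
    intro θ
    have habs : ‖(((R : ℝ) : ℂ) * Complex.exp (Complex.I * θ))‖ = R := by
      rw [norm_mul, Complex.norm_real, Real.norm_eq_abs, _root_.abs_of_nonneg hr0, Complex.norm_exp]
      simp
    have hp1 : 0 < (1 - R)^α := Real.rpow_pos_of_pos (by linarith) α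
    have hp2 : 0 < (1 + R)^α := Real.rpow_pos_of_pos (by linarith) α
    rcases le_or_gt 0 α with h | h
    · have := (st_abs_gAlpha_le hr0 hr1 habs).1 h; linarith
    · have := (st_abs_gAlpha_le hr0 hr1 habs).2 h.le; linarith
  have hBdd : BddAbove (Set.range fun θ : Set.Icc (0:ℝ) (2 * Real.pi) =>
      ‖(gAlpha α (((R : ℝ) : ℂ) * Complex.exp (Complex.I * (θ : ℝ))))‖) := by
    refine ⟨(1 - R)^α + (1 + R)^α, ?_⟩
    rintro x ⟨θ, rfl⟩
    exact hSub θ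
  have hS0 : 0 ≤ S := Real.iSup_nonneg (fun θ => norm_nonneg _)
  have hkey : ∀ t : ℝ, ∃ θ : Set.Icc (0:ℝ) (2 * Real.pi),
      ((R : ℝ) : ℂ) * Complex.exp (Complex.I * (θ : ℝ)) = z * Complex.exp (-Complex.I * t) := by
    intro t
    set w := z * Complex.exp (-Complex.I * t) with hwdef
    have habs : ‖w‖ = R := habsw t
    have hid : ((R : ℝ) : ℂ) * Complex.exp ((w.arg : ℂ) * Complex.I) = w := by
      rw [← habs]
      exact Complex.norm_mul_exp_arg_mul_I w
    have harg := Complex.arg_mem_Ioc w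
    rcases le_or_gt 0 w.arg with hpos | hneg
    · refine ⟨⟨w.arg, hpos, by linarith [harg.2, Real.pi_pos]⟩, ?_⟩
      rw [mul_comm Complex.I]
      exact hid
    · refine ⟨⟨w.arg + 2*Real.pi, ⟨by linarith [harg.1, Real.pi_pos], by linarith⟩⟩, ?_⟩
      show ((R : ℝ) : ℂ) * Complex.exp (Complex.I * ((w.arg + 2*Real.pi : ℝ) : ℂ)) = w
      rw [show ((w.arg + 2*Real.pi : ℝ) : ℂ) = (w.arg : ℂ) + 2*(Real.pi : ℂ) by push_cast; ring]
      rw [mul_add, Complex.exp_add]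
      rw [show Complex.I * (2*(Real.pi : ℂ)) = 2*(Real.pi : ℂ)*Complex.I by ring]
      rw [Complex.exp_two_pi_mul_I, mul_one, mul_comm Complex.I]
      exact hid
  have hgle : ∀ t : ℝ, ‖(gAlpha α (z * Complex.exp (-Complex.I * t)))‖ ≤ S := by
    intro t
    obtain ⟨θ, hθ⟩ := hkey t
    rw [← hθ]
    exact le_ciSup hBdd θ
  -- continuity
  have hcg : Continuous fun t : ℝ => gAlpha α (z * Complex.exp (-Complex.I * t)) * fs t :=
    (st_cont_gA α hz).mul hcont
  have hcq : Continuous q := by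
    have hden : Continuous fun t : ℝ => 1 - 2*R*Real.cos (z.arg - t) + R^2 :=
      (continuous_const.sub (continuous_const.mul
        (Real.continuous_cos.comp (continuous_const.sub continuous_id)))).add continuous_const
    exact continuous_const.div hden (fun t => (st_denom_pos h1' hr1 (z.arg - t)).ne')
  -- the difference as a single integral
  have hint1 : IntervalIntegrable (fun t => ((q t : ℝ) : ℂ) *
      (gAlpha α (z * Complex.exp (-Complex.I * t)) * fs t)) MeasureSpace.volume 0 (2*Real.pi) :=
    ((Complex.continuous_ofReal.comp hcq).mul hcg).intervalIntegrable _ _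
  have hint2 : IntervalIntegrable (fun t => ((c : ℝ) : ℂ) *
      (gAlpha α (z * Complex.exp (-Complex.I * t)) * fs t)) MeasureSpace.volume 0 (2*Real.pi) :=
    (continuous_const.mul hcg).intervalIntegrable _ _
  have hdiff : poissonExt α fs z -
      (((1 - R^2)/(1 + R^2) : ℝ) : ℂ) *
        ((1 / (2 * Real.pi) : ℂ) *
          ∫ t in (0:ℝ)..(2 * Real.pi), gAlpha α (z * Complex.exp (-Complex.I * t)) * fs t)
      = (1 / (2 * Real.pi) : ℂ) * ∫ t in (0:ℝ)..(2 * Real.pi),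
          ((q t - c : ℝ) : ℂ) * (gAlpha α (z * Complex.exp (-Complex.I * t)) * fs t) := by
    rw [poissonExt]
    have e1 : ∫ t in (0:ℝ)..(2*Real.pi), poissonKernelAlpha α (z * Complex.exp (-Complex.I * t)) * fs t
        = ∫ t in (0:ℝ)..(2*Real.pi),
            ((q t : ℝ) : ℂ) * (gAlpha α (z * Complex.exp (-Complex.I * t)) * fs t) := by
      apply intervalIntegral.integral_congr
      intro t _
      dsimp only
      rw [hker t]
      ring
    have e2 : (((1 - R^2)/(1 + R^2) : ℝ) : ℂ) *
        ((1 / (2 * Real.pi) : ℂ) *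
          ∫ t in (0:ℝ)..(2 * Real.pi), gAlpha α (z * Complex.exp (-Complex.I * t)) * fs t)
        = (1 / (2 * Real.pi) : ℂ) * ∫ t in (0:ℝ)..(2 * Real.pi),
            ((c : ℝ) : ℂ) * (gAlpha α (z * Complex.exp (-Complex.I * t)) * fs t) := by
      rw [intervalIntegral.integral_const_mul]
      rw [hcdef]
      ring
    rw [e1, e2, ← mul_sub]
    congr 1
    rw [← intervalIntegral.integral_sub hint1 hint2]
    apply intervalIntegral.integral_congr
    intro t _
    dsimp only
    push_cast
    ring
  -- coefficient
  have hcoef : ‖(1 / (2 * Real.pi) : ℂ)‖ = 1/(2*Real.pi) := by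
    rw [show (1 / (2 * Real.pi) : ℂ) = ((1/(2*Real.pi) : ℝ) : ℂ) by push_cast; ring]
    rw [Complex.norm_real, Real.norm_eq_abs, _root_.abs_of_pos (by positivity)]
  -- integral bound
  have hintnorm : IntervalIntegrable (fun t => ‖((q t - c : ℝ) : ℂ) *
      (gAlpha α (z * Complex.exp (-Complex.I * t)) * fs t)‖) MeasureSpace.volume 0 (2*Real.pi) :=
    (((Complex.continuous_ofReal.comp (hcq.sub continuous_const)).mul hcg).norm).intervalIntegrable _ _
  have hintabs : IntervalIntegrable (fun t => |q t - c| * S) MeasureSpace.volume 0 (2*Real.pi) :=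
    (((hcq.sub continuous_const).abs).mul continuous_const).intervalIntegrable _ _
  have hintabs' : IntervalIntegrable (fun t => |q t - c|) MeasureSpace.volume 0 (2*Real.pi) :=
    ((hcq.sub continuous_const).abs).intervalIntegrable _ _
  have hmono : ∀ t ∈ Set.Icc (0:ℝ) (2*Real.pi),
      ‖((q t - c : ℝ) : ℂ) * (gAlpha α (z * Complex.exp (-Complex.I * t)) * fs t)‖
        ≤ |q t - c| * S := by
    intro t _
    rw [norm_mul, Complex.norm_real, Real.norm_eq_abs, norm_mul]
    apply mul_le_mul_of_nonneg_left _ (abs_nonneg _)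
    calc ‖(gAlpha α (z * Complex.exp (-Complex.I * t)))‖ * ‖(fs t)‖
        ≤ S * 1 := mul_le_mul (hgle t) (hbd t) (norm_nonneg _) hS0
      _ = S := mul_one S
  have hb : ‖(∫ t in (0:ℝ)..(2 * Real.pi),
      ((q t - c : ℝ) : ℂ) * (gAlpha α (z * Complex.exp (-Complex.I * t)) * fs t))‖
      ≤ ∫ t in (0:ℝ)..(2*Real.pi), |q t - c| * S := by
    calc ‖(∫ t in (0:ℝ)..(2 * Real.pi),
        ((q t - c : ℝ) : ℂ) * (gAlpha α (z * Complex.exp (-Complex.I * t)) * fs t))‖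
        = ‖∫ t in (0:ℝ)..(2 * Real.pi),
            ((q t - c : ℝ) : ℂ) * (gAlpha α (z * Complex.exp (-Complex.I * t)) * fs t)‖ :=
          rfl
      _ ≤ ∫ t in (0:ℝ)..(2*Real.pi), ‖((q t - c : ℝ) : ℂ) *
            (gAlpha α (z * Complex.exp (-Complex.I * t)) * fs t)‖ :=
          intervalIntegral.norm_integral_le_integral_norm (by positivity)
      _ ≤ ∫ t in (0:ℝ)..(2*Real.pi), |q t - c| * S :=
          intervalIntegral.integral_mono_on (by positivity) hintnorm hintabs hmono
  -- the key integral value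
  have hIval : ∫ t in (0:ℝ)..(2*Real.pi), |q t - c| = 8 * Real.arctan R := by
    have hcomp := intervalIntegral.integral_comp_sub_left (a := (0:ℝ)) (b := 2*Real.pi)
      (fun s => |(1 - R^2)/(1 - 2*R*Real.cos s + R^2) - (1 - R^2)/(1 + R^2)|) z.arg
    rw [sub_zero] at hcomp
    have hper : Function.Periodic
        (fun s => |(1 - R^2)/(1 - 2*R*Real.cos s + R^2) - (1 - R^2)/(1 + R^2)|) (2*Real.pi) := by
      intro s
      simp only [Real.cos_add_two_pi]
    have hshift := hper.intervalIntegral_add_eq (z.arg - 2*Real.pi) (-(π/2))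
    rw [sub_add_cancel, show -(π/2) + 2*Real.pi = 3*π/2 by ring] at hshift
    calc ∫ t in (0:ℝ)..(2*Real.pi), |q t - c| = ∫ t in (0:ℝ)..(2*Real.pi),
          (fun s => |(1 - R^2)/(1 - 2*R*Real.cos s + R^2) - (1 - R^2)/(1 + R^2)|) (z.arg - t) := rfl
      _ = ∫ s in (z.arg - 2*Real.pi)..z.arg,
          |(1 - R^2)/(1 - 2*R*Real.cos s + R^2) - (1 - R^2)/(1 + R^2)| := hcomp
      _ = ∫ s in (-(π/2))..(3*π/2),
          |(1 - R^2)/(1 - 2*R*Real.cos s + R^2) - (1 - R^2)/(1 + R^2)| := hshift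
      _ = 8 * Real.arctan R := st_key_integral hr0 hr1
  -- assemble
  rw [hdiff, norm_mul, hcoef]
  calc 1/(2*Real.pi) * ‖(∫ t in (0:ℝ)..(2 * Real.pi),
      ((q t - c : ℝ) : ℂ) * (gAlpha α (z * Complex.exp (-Complex.I * t)) * fs t))‖
      ≤ 1/(2*Real.pi) * ∫ t in (0:ℝ)..(2*Real.pi), |q t - c| * S :=
        mul_le_mul_of_nonneg_left hb (by positivity)
    _ = 1/(2*Real.pi) * ((∫ t in (0:ℝ)..(2*Real.pi), |q t - c|) * S) := by
        rw [intervalIntegral.integral_mul_const]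
    _ = 1/(2*Real.pi) * (8 * Real.arctan R * S) := by rw [hIval]
    _ = 4 / Real.pi * S * Real.arctan R := by
        field_simp
        ring

end Core

lemma st_abs_circle {r : ℝ} (h0 : 0 ≤ r) (θ : ℝ) :
    ‖(((r : ℝ) : ℂ) * Complex.exp (Complex.I * θ))‖ = r := by
  rw [norm_mul, Complex.norm_real, Real.norm_eq_abs, _root_.abs_of_nonneg h0, Complex.norm_exp]
  simp

/-- For a continuous `2π`-periodic boundary function `f*` bounded by `1`
and `f = P_α[f*]`, `G_α(z) = (1/2π)∫₀^{2π} g_α(z e^{-it}) f*(t) dt`: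
`|f(z) - ((1-|z|²)/(1+|z|²)) G_α(z)| ≤ (4/π) (sup_{0≤θ≤2π} |g_α(|z|e^{iθ})|) arctan|z|`,
with the stated particular bounds for `α ≥ 0` and `-1 < α < 0`. -/
theorem schwarz_type_gAlpha (α : ℝ) (hα : -1 < α) (fs : ℝ → ℂ) (hcont : Continuous fs)
    (hper : Function.Periodic fs (2 * Real.pi)) (hbd : ∀ t : ℝ, ‖fs t‖ ≤ 1) :
    (∀ z ∈ Metric.ball (0 : ℂ) 1,
        ‖poissonExt α fs z -
            ((((1 - ‖z‖ ^ 2) / (1 + ‖z‖ ^ 2) : ℝ)) : ℂ) *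
              ((1 / (2 * Real.pi) : ℂ) *
                ∫ t in (0:ℝ)..(2 * Real.pi), gAlpha α (z * Complex.exp (-Complex.I * t)) * fs t)‖ ≤
          4 / Real.pi *
              (⨆ θ : Set.Icc (0:ℝ) (2 * Real.pi),
                ‖gAlpha α (((‖z‖ : ℝ) : ℂ) * Complex.exp (Complex.I * (θ : ℝ)))‖) *
            Real.arctan (‖z‖)) ∧
      (0 ≤ α →
        ∀ z ∈ Metric.ball (0 : ℂ) 1,
          ‖poissonExt α fs z -
              ((((1 - ‖z‖ ^ 2) / (1 + ‖z‖ ^ 2) : ℝ)) : ℂ) *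
                ((1 / (2 * Real.pi) : ℂ) *
                  ∫ t in (0:ℝ)..(2 * Real.pi), gAlpha α (z * Complex.exp (-Complex.I * t)) * fs t)‖ ≤
            (2 : ℝ) ^ (α + 2) / Real.pi * Real.arctan (‖z‖)) ∧
      (α < 0 →
        ∀ z ∈ Metric.ball (0 : ℂ) 1,
          ‖poissonExt α fs z -
              ((((1 - ‖z‖ ^ 2) / (1 + ‖z‖ ^ 2) : ℝ)) : ℂ) *
                ((1 / (2 * Real.pi) : ℂ) *
                  ∫ t in (0:ℝ)..(2 * Real.pi), gAlpha α (z * Complex.exp (-Complex.I * t)) * fs t)‖ ≤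
            4 / Real.pi * (1 - ‖z‖) ^ α * Real.arctan (‖z‖)) := by
  have hball : ∀ z ∈ Metric.ball (0 : ℂ) 1, ‖z‖ < 1 := by
    intro z hz
    rw [Metric.mem_ball, dist_zero_right] at hz
    exact hz
  haveI : Nonempty (Set.Icc (0:ℝ) (2 * Real.pi)) :=
    ⟨⟨0, le_refl 0, by positivity⟩⟩
  refine ⟨fun z hz => st_core α fs hcont hbd (hball z hz), fun hα0 z hz => ?_, fun hα0 z hz => ?_⟩
  · -- α ≥ 0
    have hz1 := hball z hz
    have hr0 : 0 ≤ ‖z‖ := norm_nonneg z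
    have hS2 : (⨆ θ : Set.Icc (0:ℝ) (2 * Real.pi),
        ‖(gAlpha α (((‖z‖ : ℝ) : ℂ) * Complex.exp (Complex.I * (θ : ℝ))))‖)
          ≤ (2:ℝ)^α := by
      apply ciSup_le
      intro θ
      calc ‖(gAlpha α (((‖z‖ : ℝ) : ℂ) * Complex.exp (Complex.I * (θ:ℝ))))‖
          ≤ (1 + ‖z‖)^α :=
            (st_abs_gAlpha_le hr0 hz1 (st_abs_circle hr0 (θ:ℝ))).1 hα0
        _ ≤ (2:ℝ)^α := Real.rpow_le_rpow (by linarith) (by linarith) hα0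
    refine le_trans (st_core α fs hcont hbd hz1) ?_
    have h4 : (2:ℝ)^(α+2) = 2^α * 4 := by
      rw [Real.rpow_add (by norm_num : (0:ℝ) < 2)]
      rw [show ((2:ℝ):ℝ)^(2:ℝ) = 4 by
        rw [show (2:ℝ) = ((2:ℕ):ℝ) by norm_num, Real.rpow_natCast]; norm_num]
    have harct : 0 ≤ Real.arctan (‖z‖) := by
      rw [← Real.arctan_zero]
      exact Real.arctan_strictMono.monotone hr0
    calc 4 / Real.pi * (⨆ θ : Set.Icc (0:ℝ) (2 * Real.pi),
          ‖(gAlpha α (((‖z‖ : ℝ) : ℂ) * Complex.exp (Complex.I * (θ : ℝ))))‖) *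
        Real.arctan (‖z‖)
        ≤ 4 / Real.pi * (2:ℝ)^α * Real.arctan (‖z‖) := by
          apply mul_le_mul_of_nonneg_right _ harct
          exact mul_le_mul_of_nonneg_left hS2 (by positivity)
      _ = (2:ℝ)^(α+2) / Real.pi * Real.arctan (‖z‖) := by
          rw [h4]; ring
  · -- α < 0
    have hz1 := hball z hz
    have hr0 : 0 ≤ ‖z‖ := norm_nonneg z
    have hS2 : (⨆ θ : Set.Icc (0:ℝ) (2 * Real.pi),
        ‖(gAlpha α (((‖z‖ : ℝ) : ℂ) * Complex.exp (Complex.I * (θ : ℝ))))‖)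
          ≤ (1 - ‖z‖)^α := by
      apply ciSup_le
      intro θ
      exact (st_abs_gAlpha_le hr0 hz1 (st_abs_circle hr0 (θ:ℝ))).2 hα0.le
    refine le_trans (st_core α fs hcont hbd hz1) ?_
    have harct : 0 ≤ Real.arctan (‖z‖) := by
      rw [← Real.arctan_zero]
      exact Real.arctan_strictMono.monotone hr0
    apply mul_le_mul_of_nonneg_right _ harct
    exact mul_le_mul_of_nonneg_left hS2 (by positivity)
end

section
/- Let α ≥ 0, let f* : ℝ → ℂ be continuous, 2π-periodic with |f*(t)| ≤ 1 for all t, and let f = P_α[f*]. Then for every z ∈ 𝔻, |f(z) − ((1−|z|²)^{α+1}/(1+|z|²))·f(0)| ≤ (2^{α+2}/π)·arctan|z| + 2^{α+1}·(1−|z|)·(1 − (1−|z|)^α). -/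
open Complex MeasureTheory Real Set

theorem lemA (α r : ℝ) (hα : 0 ≤ α) (hr0 : 0 ≤ r) (hr1 : r < 1) (v : ℂ) (hv : ‖v‖ ≤ r) :
    ‖(1 - v) ^ (-(α:ℂ)) - 1‖ ≤ (1 - r) ^ (-α) - 1 := by
  have hbase : ∀ s : ℝ, s ∈ Set.uIcc (0:ℝ) 1 → (0:ℝ) < 1 - s * r ∧ (1 - (s:ℂ) * v) ∈ Complex.slitPlane := by
    intro s hs
    rw [Set.uIcc_of_le (by norm_num)] at hs
    obtain ⟨h0, h1⟩ := hs
    refine ⟨by nlinarith, Or.inl ?_⟩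
    have habs : ‖(s:ℂ) * v‖ ≤ s * r := by
      rw [norm_mul, Complex.norm_real, Real.norm_eq_abs, _root_.abs_of_nonneg h0]
      exact mul_le_mul_of_nonneg_left hv h0
    have hre : (((s:ℂ) * v).re) ≤ s * r := le_trans (Complex.re_le_norm _) habs
    simp only [Complex.sub_re, Complex.one_re]
    nlinarith
  set φ' : ℝ → ℂ := fun s => (-(α:ℂ)) * (1 - (s:ℂ) * v) ^ (-(α:ℂ) - 1) * (-v) with hφ'
  have hderφ : ∀ s ∈ Set.uIcc (0:ℝ) 1,
      HasDerivAt (fun s : ℝ => (1 - (s:ℂ) * v) ^ (-(α:ℂ))) (φ' s) s := by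
    intro s hs
    have hb : HasDerivAt (fun s : ℝ => 1 - (s:ℂ) * v) (-v) s := by
      have h1 : HasDerivAt (fun s : ℝ => (s:ℂ)) 1 s := Complex.ofRealCLM.hasDerivAt
      simpa using ((h1.mul_const v).const_sub 1)
    have h2 := ((Complex.hasStrictDerivAt_cpow_const (c := -(α:ℂ))
      (hbase s hs).2).hasDerivAt).comp s hb
    have h3 : ((fun z : ℂ => z ^ (-(α:ℂ))) ∘ fun s : ℝ => 1 - (s:ℂ) * v)
        = fun s : ℝ => (1 - (s:ℂ) * v) ^ (-(α:ℂ)) := rfl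
    rw [h3] at h2
    convert h2 using 1
  set ψ' : ℝ → ℝ := fun s => α * r * (1 - s * r) ^ (-α - 1) with hψ'
  have hcontψ : ContinuousOn ψ' (Set.uIcc (0:ℝ) 1) := by
    apply ContinuousOn.mul continuousOn_const
    apply ContinuousOn.rpow_const
    · fun_prop
    · intro s hs; exact Or.inl (ne_of_gt (hbase s hs).1)
  have hintψ : IntervalIntegrable ψ' MeasureTheory.volume 0 1 :=
    hcontψ.intervalIntegrable
  have hFTCψ : ∫ s in (0:ℝ)..1, ψ' s = (1 - r)^(-α) - 1 := by
    have hderψ : ∀ s ∈ Set.uIcc (0:ℝ) 1, HasDerivAt (fun s : ℝ => (1 - s * r) ^ (-α)) (ψ' s) s := by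
      intro s hs
      have hb : HasDerivAt (fun s : ℝ => 1 - s * r) (-r) s := by
        simpa using ((hasDerivAt_id s).mul_const r).const_sub 1
      have := hb.rpow_const (p := -α) (Or.inl (ne_of_gt (hbase s hs).1))
      convert this using 1
      rw [hψ']; ring
    rw [intervalIntegral.integral_eq_sub_of_hasDerivAt hderψ hintψ]
    norm_num
  have hcontφ' : IntervalIntegrable φ' MeasureTheory.volume 0 1 := by
    apply ContinuousOn.intervalIntegrable
    apply ContinuousOn.mul _ continuousOn_const
    apply ContinuousOn.mul continuousOn_const
    apply ContinuousOn.cpow_const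
    · fun_prop
    · intro s hs; exact (hbase s hs).2
  have key : ‖(1 - v) ^ (-(α:ℂ)) - 1‖ ≤ |∫ s in (0:ℝ)..1, ψ' s| := by
    have hFTC := intervalIntegral.integral_eq_sub_of_hasDerivAt hderφ hcontφ'
    have h10 : ((1 - (1:ℂ) * v) ^ (-(α:ℂ)) - (1 - (0:ℂ) * v) ^ (-(α:ℂ)))
        = (1 - v) ^ (-(α:ℂ)) - 1 := by
      norm_num
    rw [← h10]
    push_cast at hFTC
    rw [← hFTC]
    apply intervalIntegral.norm_integral_le_abs_of_norm_le _ hintψ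
    filter_upwards [MeasureTheory.ae_restrict_mem measurableSet_Ioc] with s hs
    rw [Set.uIoc_of_le (by norm_num : (0:ℝ) ≤ 1)] at hs
    have hs' : s ∈ Set.uIcc (0:ℝ) 1 := by
      rw [Set.uIcc_of_le (by norm_num)]; exact Set.mem_Icc_of_Ioc hs
    have h1 : (0:ℝ) < 1 - s * r := (hbase s hs').1
    have h2 : 1 - s * r ≤ ‖1 - (s:ℂ) * v‖ := by
      have h3 := norm_sub_norm_le (1:ℂ) ((s:ℂ)*v)
      have hsa : ‖(s:ℂ) * v‖ ≤ s * r := by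
        rw [norm_mul, Complex.norm_real, Real.norm_eq_abs, _root_.abs_of_nonneg hs.1.le]
        exact mul_le_mul_of_nonneg_left hv hs.1.le
      simp only [norm_one] at h3
      linarith
    simp only [hφ', norm_mul, norm_neg]
    have hcp : ‖(1 - (s:ℂ) * v) ^ (-(α:ℂ) - 1)‖ = ‖1 - (s:ℂ)*v‖ ^ (-α - 1) := by
      have he : (-(α:ℂ) - 1) = ((-α - 1 : ℝ) : ℂ) := by push_cast; ring
      rw [he, Complex.norm_cpow_real]
    rw [hcp]
    have hle : ‖1 - (s:ℂ)*v‖ ^ (-α - 1) ≤ (1 - s * r) ^ (-α - 1) :=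
      Real.rpow_le_rpow_of_nonpos h1 h2 (by linarith)
    calc ‖(α:ℂ)‖ * ‖1 - (s:ℂ)*v‖ ^ (-α-1) * ‖v‖
        ≤ α * (1 - s*r)^(-α-1) * r := by
          apply mul_le_mul _ hv (norm_nonneg _) (by positivity)
          apply mul_le_mul _ hle (Real.rpow_nonneg (norm_nonneg _) _) hα
          simp [Complex.norm_real, _root_.abs_of_nonneg hα]
      _ = ψ' s := by rw [hψ']; ring
  rw [hFTCψ] at key
  have hge : (1:ℝ) ≤ (1-r)^(-α) := by
    have := Real.rpow_le_rpow_of_nonpos (by linarith : (0:ℝ) < 1 - r) (by linarith : 1 - r ≤ 1) (by linarith : -α ≤ 0)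
    simpa using this
  rwa [_root_.abs_of_nonneg (by linarith)] at key

theorem lemC1 (k : ℝ) (s : ℝ) (hs : Real.cos (s/2) ≠ 0) :
    HasDerivAt (fun x => 2 * Real.arctan (k * Real.tan (x/2)))
      (k / (Real.cos (s/2)^2 + k^2 * Real.sin (s/2)^2)) s := by
  have h1 : HasDerivAt (fun x : ℝ => x/2) (1/2) s := by
    simpa using (hasDerivAt_id s).div_const 2
  have h2 : HasDerivAt (fun x : ℝ => Real.tan (x/2)) ((1/Real.cos (s/2)^2) * (1/2)) s :=
    by have := (Real.hasDerivAt_tan hs).comp s h1; exact this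
  have h3 : HasDerivAt (fun x : ℝ => k * Real.tan (x/2)) (k * ((1/Real.cos (s/2)^2) * (1/2))) s :=
    h2.const_mul k
  have h4 := (Real.hasDerivAt_arctan (k * Real.tan (s/2))).comp s h3
  have h5 := h4.const_mul 2
  refine h5.congr_deriv ?_
  symm
  have hc2 : Real.cos (s/2)^2 ≠ 0 := pow_ne_zero 2 hs
  rw [Real.tan_eq_sin_div_cos]
  have hpyth : Real.sin (s/2)^2 + Real.cos (s/2)^2 = 1 := Real.sin_sq_add_cos_sq _
  field_simp

theorem denom_pos (ρ : ℝ) (h1 : |ρ| < 1) (s : ℝ) : 0 < 1 - 2*ρ*Real.cos s + ρ^2 := by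
  have hc1 := Real.cos_le_one s
  have hc2 := Real.neg_one_le_cos s
  have h := abs_lt.1 h1
  rcases le_or_gt 0 ρ with hρ | hρ
  · nlinarith [sq_nonneg (1 - ρ), mul_nonneg hρ (by linarith : (0:ℝ) ≤ 1 - Real.cos s)]
  · nlinarith [sq_nonneg (1 + ρ), mul_nonneg (by linarith : (0:ℝ) ≤ -ρ) (by linarith : (0:ℝ) ≤ 1 + Real.cos s)]

theorem lemC2 (ρ : ℝ) (h1 : |ρ| < 1) :
    ∫ s in (0:ℝ)..(π/2), (1-ρ^2)/(1 - 2*ρ*Real.cos s + ρ^2) = 2 * Real.arctan ((1+ρ)/(1-ρ)) := by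
  have hρ := abs_lt.1 h1
  have hder : ∀ s ∈ Set.uIcc (0:ℝ) (π/2),
      HasDerivAt (fun x => 2 * Real.arctan (((1+ρ)/(1-ρ)) * Real.tan (x/2)))
        ((1-ρ^2)/(1 - 2*ρ*Real.cos s + ρ^2)) s := by
    intro s hs
    rw [Set.uIcc_of_le (by positivity)] at hs
    have hcos : 0 < Real.cos (s/2) := by
      apply Real.cos_pos_of_mem_Ioo
      constructor
      · linarith [hs.1, Real.pi_pos]
      · linarith [hs.2, Real.pi_pos]
    have hD := lemC1 ((1+ρ)/(1-ρ)) s hcos.ne'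
    convert hD using 1
    have hc2 : Real.cos (s/2)^2 = 1/2 + Real.cos s/2 := by
      have := Real.cos_sq (s/2)
      rwa [show 2*(s/2) = s by ring] at this
    have hs2 : Real.sin (s/2)^2 = 1/2 - Real.cos s/2 := by
      have := Real.sin_sq_add_cos_sq (s/2)
      linarith
    have h1r : (1:ℝ) - ρ ≠ 0 := by linarith
    have hd := denom_pos ρ h1 s
    have hCpos : 0 < Real.cos (s/2)^2 + ((1+ρ)/(1-ρ))^2 * Real.sin (s/2)^2 :=
      add_pos_of_pos_of_nonneg (pow_pos hcos 2) (by positivity)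
    rw [div_eq_div_iff hd.ne' hCpos.ne', hc2, hs2]
    field_simp
    ring
  have hcont : IntervalIntegrable (fun s => (1-ρ^2)/(1 - 2*ρ*Real.cos s + ρ^2))
      MeasureTheory.volume 0 (π/2) := by
    apply ContinuousOn.intervalIntegrable
    apply ContinuousOn.div continuousOn_const (by fun_prop)
    intro s _; exact (denom_pos ρ h1 s).ne'
  rw [intervalIntegral.integral_eq_sub_of_hasDerivAt hder hcont]
  rw [show π/2/2 = π/4 by ring]
  norm_num [Real.tan_pi_div_four]

theorem lemC (r : ℝ) (hr0 : 0 ≤ r) (hr1 : r < 1) :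
    ∫ s in (0:ℝ)..(2*π), |(1-r^2)/(1 - 2*r*Real.cos s + r^2) - (1-r^2)/(1+r^2)|
      = 8 * Real.arctan r := by
  have habs : |r| < 1 := by rwa [_root_.abs_of_nonneg hr0]
  set c₀ : ℝ := (1-r^2)/(1+r^2) with hc₀
  set g : ℝ → ℝ := fun s => (1-r^2)/(1 - 2*r*Real.cos s + r^2) - c₀ with hg
  have hgcont : Continuous g := by
    apply Continuous.sub _ continuous_const
    apply Continuous.div continuous_const (by fun_prop)
    intro s; exact (denom_pos r habs s).ne'
  have hGcont : Continuous (fun s => |g s|) := hgcont.abs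
  have hper : Function.Periodic (fun s => |g s|) (2*π) := by
    intro x; simp only [hg, Real.cos_add_two_pi]
  -- step 1 : shift to -π..π
  have h1 : ∫ s in (0:ℝ)..(2*π), |g s| = ∫ s in (-π)..π, |g s| := by
    have := hper.intervalIntegral_add_eq 0 (-π)
    rw [zero_add] at this
    rw [this, show -π + 2*π = π by ring]
  -- step 2 : evenness
  have heven : ∀ s, |g (-s)| = |g s| := by
    intro s; simp only [hg, Real.cos_neg]
  have h2 : ∫ s in (-π)..π, |g s| = 2 * ∫ s in (0:ℝ)..π, |g s| := by
    have hneg : ∫ s in (-π)..(0:ℝ), |g s| = ∫ s in (0:ℝ)..π, |g s| := by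
      have h := intervalIntegral.integral_comp_neg (a := (0:ℝ)) (b := π) (fun s => |g s|)
      simp only [heven, neg_zero] at h
      exact h.symm
    rw [← intervalIntegral.integral_add_adjacent_intervals
      (hGcont.intervalIntegrable (-π) 0) (hGcont.intervalIntegrable 0 π), hneg]
    ring
  -- step 3 : split 0..π
  have h3 : ∫ s in (0:ℝ)..π, |g s|
      = (∫ s in (0:ℝ)..(π/2), |g s|) + ∫ s in (π/2)..π, |g s| := by
    rw [intervalIntegral.integral_add_adjacent_intervals
      (hGcont.intervalIntegrable 0 (π/2)) (hGcont.intervalIntegrable (π/2) π)]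
  have hpi := Real.pi_pos
  -- signs
  have h4 : ∫ s in (0:ℝ)..(π/2), |g s| = ∫ s in (0:ℝ)..(π/2), g s := by
    apply intervalIntegral.integral_congr
    intro s hs
    rw [Set.uIcc_of_le (by positivity)] at hs
    have hcos : 0 ≤ Real.cos s := Real.cos_nonneg_of_mem_Icc ⟨by linarith [hs.1], hs.2⟩
    have hd := denom_pos r habs s
    have : c₀ ≤ (1-r^2)/(1 - 2*r*Real.cos s + r^2) := by
      rw [hc₀]
      apply div_le_div_of_nonneg_left (by nlinarith) hd (by nlinarith)
    simp only [hg]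
    rw [_root_.abs_of_nonneg (by linarith)]
  have h5 : ∫ s in (π/2)..π, |g s| = - ∫ s in (π/2)..π, g s := by
    rw [← intervalIntegral.integral_neg]
    apply intervalIntegral.integral_congr
    intro s hs
    rw [Set.uIcc_of_le (by linarith)] at hs
    have hcos : Real.cos s ≤ 0 :=
      Real.cos_nonpos_of_pi_div_two_le_of_le hs.1 (by linarith [hs.2])
    have hd := denom_pos r habs s
    have : (1-r^2)/(1 - 2*r*Real.cos s + r^2) ≤ c₀ := by
      rw [hc₀]
      apply div_le_div_of_nonneg_left (by nlinarith) (by positivity) (by nlinarith)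
    simp only [hg]
    rw [_root_.abs_of_nonpos (by linarith)]
  -- compute ∫ 0..π/2 of g
  have hconst : ∀ a b : ℝ, ∫ _ in a..b, c₀ = (b - a) * c₀ := by
    intro a b; rw [intervalIntegral.integral_const, smul_eq_mul]
  have hker : IntervalIntegrable (fun s => (1-r^2)/(1 - 2*r*Real.cos s + r^2))
      MeasureTheory.volume 0 (π/2) := by
    apply ContinuousOn.intervalIntegrable
    apply ContinuousOn.div continuousOn_const (by fun_prop)
    intro s _; exact (denom_pos r habs s).ne'
  have h6 : ∫ s in (0:ℝ)..(π/2), g s = 2 * Real.arctan ((1+r)/(1-r)) - (π/2) * c₀ := by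
    rw [hg]
    rw [intervalIntegral.integral_sub hker (intervalIntegrable_const)]
    rw [lemC2 r habs, hconst]
    ring
  -- compute ∫ π/2..π of g via reflection
  have h7 : ∫ s in (π/2)..π, g s = 2 * Real.arctan ((1-r)/(1+r)) - (π/2) * c₀ := by
    have hrefl := intervalIntegral.integral_comp_sub_left g π (a := 0) (b := π/2)
    rw [show π - π/2 = π/2 by ring, sub_zero] at hrefl
    rw [← hrefl]
    have hgeq : ∀ s : ℝ, g (π - s) = (1-(-r)^2)/(1 - 2*(-r)*Real.cos s + (-r)^2) - c₀ := by
      intro s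
      simp only [hg, Real.cos_pi_sub]
      ring_nf
    have habs' : |(-r)| < 1 := by rwa [abs_neg]
    have hker' : IntervalIntegrable (fun s => (1-(-r)^2)/(1 - 2*(-r)*Real.cos s + (-r)^2))
        MeasureTheory.volume 0 (π/2) := by
      apply ContinuousOn.intervalIntegrable
      apply ContinuousOn.div continuousOn_const (by fun_prop)
      intro s _; exact (denom_pos (-r) habs' s).ne'
    calc ∫ s in (0:ℝ)..(π/2), g (π - s)
        = ∫ s in (0:ℝ)..(π/2), ((1-(-r)^2)/(1 - 2*(-r)*Real.cos s + (-r)^2) - c₀) := by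
          apply intervalIntegral.integral_congr; intro s _; exact hgeq s
      _ = 2 * Real.arctan ((1+(-r))/(1-(-r))) - (π/2) * c₀ := by
          rw [intervalIntegral.integral_sub hker' intervalIntegrable_const,
            lemC2 (-r) habs', hconst]
          ring
      _ = 2 * Real.arctan ((1-r)/(1+r)) - (π/2) * c₀ := by
          rw [show ((1:ℝ) + -r) = 1 - r by ring, show ((1:ℝ) - -r) = 1 + r by ring]
  -- Real.arctan identities
  have ha1 : Real.arctan ((1+r)/(1-r)) = π/4 + Real.arctan r := by
    have := Real.arctan_add (x := 1) (y := r) (by rwa [one_mul])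
    rw [Real.arctan_one, one_mul] at this
    exact this.symm
  have ha2 : Real.arctan ((1-r)/(1+r)) = π/4 - Real.arctan r := by
    have hyp : (1:ℝ) * (-r) < 1 := by rw [one_mul]; linarith
    have := Real.arctan_add (x := 1) (y := -r) hyp
    rw [Real.arctan_one, Real.arctan_neg] at this
    rw [show ((1:ℝ) + -r)/(1 - 1 * -r) = (1-r)/(1+r) by ring] at this
    linarith [this]
  rw [h1, h2, h3, h4, h5, h6, h7, ha1, ha2]
  ring

theorem lemB (α r : ℝ) (hα : 0 ≤ α) (hr0 : 0 ≤ r) (hr1 : r < 1) (w : ℂ)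
    (hw : ‖w‖ = r) :
    ‖poissonKernelAlpha α w - (((1 - r^2)^(α+1)/(1+r^2) : ℝ) : ℂ)‖
      ≤ 2^α * |(1-r^2)/(1 - 2*w.re + r^2) - (1-r^2)/(1+r^2)|
        + 2^(α+1)*(1-r)*(1-(1-r)^α) := by
  have h1r2 : (0:ℝ) < 1 - r^2 := by nlinarith
  have h1r : (0:ℝ) < 1 - r := by linarith
  have hwre : |w.re| ≤ r := by rw [← hw]; exact Complex.abs_re_le_norm w
  have hwre' := abs_le.1 hwre
  set N : ℝ := 1 - 2*w.re + r^2 with hN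
  have hNpos : 0 < N := by nlinarith
  have hNeq : ((1:ℂ) - w) * (1 - (starRingEnd ℂ) w) = (N : ℂ) := by
    have hc : (1 : ℂ) - (starRingEnd ℂ) w = (starRingEnd ℂ) (1 - w) := by
      simp [map_sub]
    rw [hc, Complex.mul_conj]
    norm_cast
    rw [hN, Complex.normSq_sub]
    simp only [Complex.normSq_one, Complex.normSq_eq_norm_sq, hw]
    have h2 : (1 * (starRingEnd ℂ) w).re = w.re := by simp [Complex.conj_re]
    rw [h2]
    norm_num
    ring
  have habs1cw : 1 - r ≤ ‖(1:ℂ) - (starRingEnd ℂ) w‖ := by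
    have h3 := norm_sub_norm_le (1:ℂ) ((starRingEnd ℂ) w)
    simp only [norm_one, Complex.norm_conj, hw] at h3
    linarith
  have hb0 : (1:ℂ) - (starRingEnd ℂ) w ≠ 0 := by
    intro h
    rw [h] at habs1cw; simp at habs1cw; linarith
  set u : ℂ := ((1:ℂ) - (starRingEnd ℂ) w) ^ ((α:ℂ)) with hu
  have hucpow : ((1:ℂ) - (starRingEnd ℂ) w) ^ ((α:ℂ)+1) = u * ((1:ℂ) - (starRingEnd ℂ) w) := by
    rw [hu, Complex.cpow_add _ _ hb0, Complex.cpow_one]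
  have huinv : u⁻¹ = ((1:ℂ) - (starRingEnd ℂ) w) ^ (-(α:ℂ)) := by
    rw [hu, ← Complex.cpow_neg]
  have habsuinv : ‖u⁻¹‖ ≤ (1-r)^(-α) := by
    rw [huinv, show (-(α:ℂ)) = ((-α : ℝ) : ℂ) by push_cast; ring, Complex.norm_cpow_real]
    exact Real.rpow_le_rpow_of_nonpos h1r habs1cw (neg_nonpos.2 hα)
  -- kernel = A * u⁻¹ / N
  set A : ℝ := (1 - r^2)^(α+1) with hA
  have hNc : ((N:ℝ):ℂ) ≠ 0 := Complex.ofReal_ne_zero.mpr hNpos.ne'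
  have hker : poissonKernelAlpha α w = (A:ℂ) * u⁻¹ / (N:ℂ) := by
    rw [poissonKernelAlpha, hw, hucpow]
    rw [show ((1:ℂ) - w) * (u * ((1:ℂ) - (starRingEnd ℂ) w))
        = (((1:ℂ) - w) * ((1:ℂ) - (starRingEnd ℂ) w)) * u by ring, hNeq]
    rw [hA]
    field_simp
  -- decomposition
  have hdecomp : poissonKernelAlpha α w - (((A/(1+r^2)) : ℝ) : ℂ)
      = u⁻¹ * (((A/N : ℝ):ℂ) - ((A/(1+r^2) : ℝ):ℂ)) + ((A/(1+r^2) : ℝ):ℂ) * (u⁻¹ - 1) := by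
    rw [hker]
    have hc : ((A/N : ℝ):ℂ) = (A:ℂ)/(N:ℂ) := by push_cast; ring
    rw [hc]
    ring
  rw [show (((1 - r^2)^(α+1)/(1+r^2) : ℝ) : ℂ) = (((A/(1+r^2)) : ℝ) : ℂ) by rw [hA]]
  rw [hdecomp]
  have hlemA : ‖u⁻¹ - 1‖ ≤ (1-r)^(-α) - 1 := by
    rw [huinv]
    exact lemA α r hα hr0 hr1 ((starRingEnd ℂ) w)
      (by rw [Complex.norm_conj, hw])
  have step1 : ‖u⁻¹ * (((A/N : ℝ):ℂ) - ((A/(1+r^2) : ℝ):ℂ))‖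
      ≤ (1-r)^(-α) * |A/N - A/(1+r^2)| := by
    rw [norm_mul, ← Complex.ofReal_sub, Complex.norm_real, Real.norm_eq_abs]
    exact mul_le_mul_of_nonneg_right habsuinv (abs_nonneg _)
  have step2 : ‖((A/(1+r^2) : ℝ):ℂ) * (u⁻¹ - 1)‖
      ≤ (A/(1+r^2)) * ((1-r)^(-α) - 1) := by
    rw [norm_mul, Complex.norm_real, Real.norm_eq_abs, _root_.abs_of_nonneg (by rw [hA]; positivity)]
    exact mul_le_mul_of_nonneg_left hlemA (by rw [hA]; positivity)
  -- real algebra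
  have hAsplit : A = (1-r^2)^α * (1-r^2) := by
    rw [hA, Real.rpow_add h1r2, Real.rpow_one]
  have hfact : |A/N - A/(1+r^2)| = (1-r^2)^α * |(1-r^2)/N - (1-r^2)/(1+r^2)| := by
    rw [← _root_.abs_of_nonneg (Real.rpow_nonneg h1r2.le α), ← abs_mul]
    congr 1
    rw [hAsplit]; ring
  have hsplit2 : (1-r^2)^α = (1-r)^α * (1+r)^α := by
    rw [show (1-r^2) = (1-r)*(1+r) by ring, Real.mul_rpow h1r.le (by linarith)]
  have hcoeff : (1-r)^(-α) * (1-r^2)^α = (1+r)^α := by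
    rw [hsplit2, ← mul_assoc, ← Real.rpow_add h1r]
    norm_num
  have h2α : (1+r)^α ≤ 2^α := Real.rpow_le_rpow (by linarith) (by linarith) hα
  have hterm2 : (A/(1+r^2)) * ((1-r)^(-α) - 1)
      ≤ 2^(α+1)*(1-r)*(1-(1-r)^α) := by
    have he : (A/(1+r^2)) * ((1-r)^(-α) - 1)
        = ((1-r^2)/(1+r^2)) * ((1+r)^α * (1 - (1-r)^α)) := by
      rw [hAsplit]
      have : (1-r^2)^α * ((1-r)^(-α) - 1) = (1+r)^α * (1 - (1-r)^α) := by
        rw [mul_sub, mul_one, mul_comm ((1-r^2)^α), hcoeff, hsplit2]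
        ring
      calc (1-r^2)^α * (1-r^2)/(1+r^2) * ((1-r)^(-α) - 1)
          = ((1-r^2)/(1+r^2)) * ((1-r^2)^α * ((1-r)^(-α) - 1)) := by ring
        _ = ((1-r^2)/(1+r^2)) * ((1+r)^α * (1 - (1-r)^α)) := by rw [this]
    rw [he]
    have hc₀le : (1-r^2)/(1+r^2) ≤ 2*(1-r) := by
      rw [div_le_iff₀ (by positivity)]
      nlinarith
    have hfac : 0 ≤ 1 - (1-r)^α := by
      have := Real.rpow_le_one h1r.le (by linarith) hα
      linarith
    have h1 : (1+r)^α * (1 - (1-r)^α) ≤ 2^α * (1 - (1-r)^α) :=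
      mul_le_mul_of_nonneg_right h2α hfac
    have h2 : ((1-r^2)/(1+r^2)) * ((1+r)^α * (1 - (1-r)^α))
        ≤ (2*(1-r)) * (2^α * (1 - (1-r)^α)) := by
      apply mul_le_mul hc₀le h1 (by positivity) (by linarith)
    calc ((1-r^2)/(1+r^2)) * ((1+r)^α * (1 - (1-r)^α))
        ≤ (2*(1-r)) * (2^α * (1 - (1-r)^α)) := h2
      _ = 2^(α+1)*(1-r)*(1-(1-r)^α) := by
          rw [Real.rpow_add two_pos, Real.rpow_one]; ring
  have hterm1 : (1-r)^(-α) * |A/N - A/(1+r^2)|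
      ≤ 2^α * |(1-r^2)/N - (1-r^2)/(1+r^2)| := by
    rw [hfact, ← mul_assoc, hcoeff]
    exact mul_le_mul_of_nonneg_right h2α (abs_nonneg _)
  calc ‖u⁻¹ * (((A/N : ℝ):ℂ) - ((A/(1+r^2) : ℝ):ℂ))
        + ((A/(1+r^2) : ℝ):ℂ) * (u⁻¹ - 1)‖
      ≤ ‖u⁻¹ * (((A/N : ℝ):ℂ) - ((A/(1+r^2) : ℝ):ℂ))‖
        + ‖((A/(1+r^2) : ℝ):ℂ) * (u⁻¹ - 1)‖ := norm_add_le _ _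
    _ ≤ (1-r)^(-α) * |A/N - A/(1+r^2)| + (A/(1+r^2)) * ((1-r)^(-α) - 1) :=
        add_le_add step1 step2
    _ ≤ 2^α * |(1-r^2)/N - (1-r^2)/(1+r^2)| + 2^(α+1)*(1-r)*(1-(1-r)^α) :=
        add_le_add hterm1 hterm2


/-- Schwarz-type lemma for `α ≥ 0`: for `f = P_α[f*]` with `|f*| ≤ 1`,
`|f(z) - ((1-|z|²)^{α+1}/(1+|z|²)) f(0)| ≤ (2^{α+2}/π) arctan|z| + 2^{α+1}(1-|z|)(1-(1-|z|)^α)`. -/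
theorem schwarz_alpha_nonneg (α : ℝ) (hα : 0 ≤ α) (fs : ℝ → ℂ) (hcont : Continuous fs)
    (hper : Function.Periodic fs (2 * Real.pi)) (hbd : ∀ t : ℝ, ‖fs t‖ ≤ 1) :
    ∀ z ∈ Metric.ball (0 : ℂ) 1,
      ‖poissonExt α fs z -
          ((((1 - ‖z‖ ^ 2) ^ (α + 1) / (1 + ‖z‖ ^ 2) : ℝ)) : ℂ) *
            poissonExt α fs 0‖ ≤
        (2 : ℝ) ^ (α + 2) / Real.pi * Real.arctan (‖z‖) +
          (2 : ℝ) ^ (α + 1) * (1 - ‖z‖) * (1 - (1 - ‖z‖) ^ α) := by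
  intro z hz
  have hpi := Real.pi_pos
  set r : ℝ := ‖z‖ with hrdef
  have hr1 : r < 1 := by
    simpa [hrdef, Complex.dist_eq] using (Metric.mem_ball.mp hz)
  have hr0 : 0 ≤ r := norm_nonneg z
  have habsr : |r| < 1 := by rwa [_root_.abs_of_nonneg hr0]
  set θ : ℝ := z.arg with hθ
  set C : ℝ := (1 - r^2)^(α+1)/(1+r^2) with hC
  set Kc : ℝ := 2^(α+1)*(1-r)*(1-(1-r)^α) with hKc
  set w : ℝ → ℂ := fun t => z * Complex.exp (-Complex.I * t) with hwdef
  have habsw : ∀ t, ‖w t‖ = r := by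
    intro t
    rw [hwdef]
    simp only [norm_mul, Complex.norm_exp]
    have : (-Complex.I * (t:ℂ)).re = 0 := by simp
    rw [this, Real.exp_zero, mul_one]
  have hwre : ∀ t, (w t).re = r * Real.cos (θ - t) := by
    intro t
    have hz' : (r:ℂ) * Complex.exp (θ * Complex.I) = z := Complex.norm_mul_exp_arg_mul_I z
    have : w t = (r:ℂ) * Complex.exp (((θ - t : ℝ) : ℂ) * Complex.I) := by
      rw [hwdef]
      simp only
      rw [← hz', mul_assoc, ← Complex.exp_add]
      congr 2
      push_cast
      ring
    rw [this, Complex.re_ofReal_mul, Complex.exp_ofReal_mul_I_re]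
  -- kernel at 0
  have hker0 : ∀ t : ℝ, poissonKernelAlpha α ((0:ℂ) * Complex.exp (-Complex.I * t)) = 1 := by
    intro t
    simp [poissonKernelAlpha, Complex.one_cpow, Real.one_rpow]
  -- continuity of kernel along the circle
  have hwcont : Continuous w := by
    rw [hwdef]; fun_prop
  have hslit : ∀ t : ℝ, ((1:ℂ) - (starRingEnd ℂ) (w t)) ∈ Complex.slitPlane := by
    intro t
    left
    have : |(w t).re| ≤ r := by rw [← habsw t]; exact Complex.abs_re_le_norm _
    have h2 := abs_le.1 this
    simp only [Complex.sub_re, Complex.one_re, Complex.conj_re]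
    linarith
  have hdenne : ∀ t : ℝ, ((1:ℂ) - w t) * ((1:ℂ) - (starRingEnd ℂ) (w t)) ^ ((α:ℂ)+1) ≠ 0 := by
    intro t
    apply mul_ne_zero
    · intro h
      have h1 : ‖(1:ℂ) - w t‖ = 0 := by rw [h]; simp
      have h3 := norm_sub_norm_le (1:ℂ) (w t)
      simp only [norm_one, habsw t] at h3
      rw [h1] at h3; linarith
    · intro h
      rw [Complex.cpow_eq_zero_iff] at h
      have := Complex.slitPlane_ne_zero (hslit t)
      exact this h.1
  have hkcont : Continuous (fun t => poissonKernelAlpha α (w t)) := by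
    unfold poissonKernelAlpha
    apply Continuous.div
    · apply Complex.continuous_ofReal.comp
      apply Continuous.rpow_const
      · exact continuous_const.sub ((continuous_norm.comp hwcont).pow 2)
      · intro t; right; linarith
    · apply Continuous.mul
      · exact continuous_const.sub hwcont
      · apply Continuous.cpow
        · exact continuous_const.sub (continuous_star.comp hwcont)
        · exact continuous_const
        · exact hslit
    · exact hdenne
  -- step 2: single integral representation
  have hint1 : IntervalIntegrable (fun t => poissonKernelAlpha α (w t) * fs t) volume 0 (2*π) :=
    (hkcont.mul hcont).intervalIntegrable _ _
  have hint2 : IntervalIntegrable (fun t => (C:ℂ) * fs t) volume 0 (2*π) :=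
    (continuous_const.mul hcont).intervalIntegrable _ _
  have hrep : poissonExt α fs z - (C:ℂ) * poissonExt α fs 0
      = (1 / (2 * Real.pi) : ℂ) *
        ∫ t in (0:ℝ)..(2*π), (poissonKernelAlpha α (w t) - (C:ℂ)) * fs t := by
    unfold poissonExt
    have h0 : ∫ t in (0:ℝ)..(2*π), poissonKernelAlpha α ((0:ℂ) * Complex.exp (-Complex.I * t)) * fs t
        = ∫ t in (0:ℝ)..(2*π), fs t := by
      apply intervalIntegral.integral_congr
      intro t _
      show poissonKernelAlpha α ((0:ℂ) * Complex.exp (-Complex.I * t)) * fs t = fs t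
      rw [hker0 t, one_mul]
    rw [h0]
    rw [show ∀ a b : ℂ, ∀ c : ℂ, c * a - (C:ℂ) * (c * b) = c * (a - (C:ℂ) * b) from
      fun a b c => by ring]
    congr 1
    rw [← intervalIntegral.integral_const_mul]
    rw [← intervalIntegral.integral_sub hint1 hint2]
    apply intervalIntegral.integral_congr
    intro t _
    simp only [hwdef]
    ring
  -- pointwise bound
  set G : ℝ → ℝ := fun s => |(1-r^2)/(1 - 2*r*Real.cos s + r^2) - (1-r^2)/(1+r^2)| with hG
  have hGcont : Continuous G := by
    apply Continuous.abs
    apply Continuous.sub _ continuous_const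
    apply Continuous.div continuous_const (by fun_prop)
    intro s; exact (denom_pos r habsr s).ne'
  set B : ℝ → ℝ := fun t => 2^α * G (θ - t) + Kc with hB
  have hGθcont : Continuous (fun t => G (θ - t)) :=
    hGcont.comp (continuous_const.sub continuous_id)
  have hBcont : Continuous B := by
    apply Continuous.add _ continuous_const
    exact continuous_const.mul hGθcont
  have hptwise : ∀ t ∈ Set.uIoc (0:ℝ) (2*π),
      ‖(poissonKernelAlpha α (w t) - (C:ℂ)) * fs t‖ ≤ B t := by
    intro t _
    rw [norm_mul]
    have h1 : ‖poissonKernelAlpha α (w t) - (C:ℂ)‖ ≤ B t := by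
      rw [hB, hG]
      have := lemB α r hα hr0 hr1 (w t) (habsw t)
      rw [hwre t] at this
      simp only
      rw [show 1 - 2*(r*Real.cos (θ - t)) + r^2 = 1 - 2*r*Real.cos (θ-t) + r^2 by ring] at this
      exact this
    have h2 : ‖fs t‖ ≤ 1 := by exact hbd t
    calc ‖poissonKernelAlpha α (w t) - (C:ℂ)‖ * ‖fs t‖
        ≤ B t * 1 := mul_le_mul h1 h2 (norm_nonneg _) (le_trans (norm_nonneg _) h1)
      _ = B t := mul_one _
  -- integral of B
  have hGper : Function.Periodic G (2*π) := by
    intro x; simp only [hG, Real.cos_add_two_pi]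
  have hshift : ∫ t in (0:ℝ)..(2*π), G (θ - t) = 8 * Real.arctan r := by
    have h1 := intervalIntegral.integral_comp_sub_left (a := (0:ℝ)) (b := 2*π) G θ
    rw [h1, sub_zero]
    have h2 := hGper.intervalIntegral_add_eq (θ - 2*π) 0
    rw [show θ - 2*π + 2*π = θ by ring, zero_add] at h2
    rw [h2]
    exact lemC r hr0 hr1
  have hBint : ∫ t in (0:ℝ)..(2*π), B t = 2^α * (8 * Real.arctan r) + 2*π*Kc := by
    have hint3 : IntervalIntegrable (fun t => 2^α * G (θ - t)) volume 0 (2*π) :=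
      (continuous_const.mul hGθcont).intervalIntegrable _ _
    rw [hB]
    simp only
    rw [intervalIntegral.integral_add hint3 intervalIntegrable_const]
    rw [intervalIntegral.integral_const_mul, hshift, intervalIntegral.integral_const]
    rw [smul_eq_mul]
    ring
  -- final estimate
  rw [hrep]
  rw [norm_mul]
  have habsc : ‖1 / (2 * (Real.pi:ℂ))‖ = 1/(2*π) := by
    rw [norm_div, norm_one, norm_mul, Complex.norm_two, Complex.norm_real, Real.norm_eq_abs,
      _root_.abs_of_pos hpi]
  rw [habsc]
  have hbound : ‖∫ t in (0:ℝ)..(2*π), (poissonKernelAlpha α (w t) - (C:ℂ)) * fs t‖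
      ≤ |∫ t in (0:ℝ)..(2*π), B t| := by
    apply intervalIntegral.norm_integral_le_abs_of_norm_le _ (hBcont.intervalIntegrable _ _)
    filter_upwards [MeasureTheory.ae_restrict_mem measurableSet_uIoc] with t ht
    exact hptwise t ht
  have hKc0 : 0 ≤ Kc := by
    rw [hKc]
    have h1 : (1-r)^α ≤ 1 := Real.rpow_le_one (by linarith) (by linarith) hα
    have : (0:ℝ) ≤ 2^(α+1) := Real.rpow_nonneg (by norm_num) _
    apply mul_nonneg (mul_nonneg this (by linarith)) (by linarith)
  have harc0 : 0 ≤ Real.arctan r := by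
    rw [← Real.arctan_zero]
    exact Real.arctan_strictMono.monotone hr0
  have hBnn : (0:ℝ) ≤ ∫ t in (0:ℝ)..(2*π), B t := by
    rw [hBint]
    have : (0:ℝ) ≤ 2^α := Real.rpow_nonneg (by norm_num) _
    positivity
  rw [_root_.abs_of_nonneg hBnn] at hbound
  calc (1/(2*π)) * ‖∫ t in (0:ℝ)..(2*π), (poissonKernelAlpha α (w t) - (C:ℂ)) * fs t‖
      ≤ (1/(2*π)) * (∫ t in (0:ℝ)..(2*π), B t) := by
        apply mul_le_mul_of_nonneg_left hbound (by positivity)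
    _ = (1/(2*π)) * (2^α * (8 * Real.arctan r) + 2*π*Kc) := by rw [hBint]
    _ = (2:ℝ)^(α+2)/π * Real.arctan r + Kc := by
        have h4 : (2:ℝ)^(α+2) = 2^α * 4 := by
          rw [Real.rpow_add two_pos, Real.rpow_two]
          norm_num
        rw [h4]
        field_simp
        ring
end

section
/- Let f* : ℝ → ℂ be continuous, 2π-periodic with |f*(t)| ≤ 1 for all t, and let f = P_α[f*]. If 0 < α ≤ 1, then for every z ∈ 𝔻, |f(z) − ((1−|z|²)^{α+1}/(1+|z|²))·f(0)| ≤ 2^{α+1}·((2/π)·arctan|z| + |z|^α). If α ≥ 1, then for every z ∈ 𝔻, |f(z) − ((1−|z|²)^{α+1}/(1+|z|²))·f(0)| ≤ 2^{α+1}·((2/π)·arctan|z| + α·|z|). -/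
open Complex MeasureTheory Real Set

lemma aux_cpow_sub_one {α : ℝ} (hα : 0 < α) {u : ℂ} (hu : ‖u‖ < 1) :
    ‖(1 - u) ^ (-(α:ℂ)) - 1‖ ≤ (1 - ‖u‖) ^ (-α) - 1 := by
  set r := ‖u‖ with hrdef
  have hr0 : 0 ≤ r := norm_nonneg u
  have habs : ∀ s : ℝ, s ∈ Set.Icc (0:ℝ) 1 → ‖(s:ℂ) * u‖ = s * r := by
    intro s hs
    rw [norm_mul, Complex.norm_real, Real.norm_eq_abs, _root_.abs_of_nonneg hs.1]
  have hpos : ∀ s : ℝ, s ∈ Set.Icc (0:ℝ) 1 → 0 < 1 - s * r := by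
    intro s hs
    nlinarith [hs.1, hs.2, hr0, hu]
  have hslit : ∀ s : ℝ, s ∈ Set.Icc (0:ℝ) 1 → (1 - (s:ℂ) * u) ∈ Complex.slitPlane := by
    intro s hs
    apply Complex.mem_slitPlane_iff.mpr
    left
    have h1 : |((s:ℂ) * u).re| ≤ s * r := by
      rw [← habs s hs]; exact Complex.abs_re_le_norm _
    have h2 := hpos s hs
    simp only [Complex.sub_re, Complex.one_re]
    cases' abs_le.mp h1 with h3 h4
    linarith
  set g' : ℝ → ℂ := fun s => (α:ℂ) * u * (1 - (s:ℂ) * u) ^ (-(α:ℂ) - 1) with hg'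
  have hderiv : ∀ s ∈ Set.Icc (0:ℝ) 1,
      HasDerivAt (fun s : ℝ => (1 - (s:ℂ) * u) ^ (-(α:ℂ))) (g' s) s := by
    intro s hs
    have hF : HasDerivAt (fun ζ : ℂ => (1 - ζ * u) ^ (-(α:ℂ)))
        ((-(α:ℂ)) * (1 - (s:ℂ) * u) ^ (-(α:ℂ) - 1) * (-u)) (s:ℂ) := by
      have hin : HasDerivAt (fun ζ : ℂ => 1 - ζ * u) (-u) (s:ℂ) := by
        simpa using ((hasDerivAt_id ((s:ℂ))).mul_const u).const_sub 1
      exact hin.cpow_const (hslit s hs)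
    have := hF.comp_ofReal
    convert this using 1
    simp only [hg']
    ring
  have hcont' : ContinuousOn g' (Set.Icc (0:ℝ) 1) := by
    apply ContinuousOn.mul continuousOn_const
    intro s hs
    apply ContinuousAt.continuousWithinAt
    have hb : ContinuousAt (fun s : ℝ => 1 - (s:ℂ) * u) s :=
      continuousAt_const.sub (Complex.continuous_ofReal.continuousAt.mul continuousAt_const)
    exact ContinuousAt.cpow hb continuousAt_const (hslit s hs)
  have huIcc : Set.uIcc (0:ℝ) 1 = Set.Icc (0:ℝ) 1 := Set.uIcc_of_le zero_le_one
  have hint : IntervalIntegrable g' MeasureTheory.volume 0 1 := by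
    apply ContinuousOn.intervalIntegrable
    rwa [huIcc]
  have hftc : ∫ s in (0:ℝ)..1, g' s = (1 - u) ^ (-(α:ℂ)) - 1 := by
    rw [intervalIntegral.integral_eq_sub_of_hasDerivAt (fun s hs => hderiv s (huIcc ▸ hs)) hint]
    norm_num
  set b : ℝ → ℝ := fun s => α * r * (1 - s * r) ^ (-α - 1) with hb
  have hbderiv : ∀ s ∈ Set.Icc (0:ℝ) 1, HasDerivAt (fun s : ℝ => (1 - s * r) ^ (-α)) (b s) s := by
    intro s hs
    have h1 : HasDerivAt (fun s : ℝ => 1 - s * r) (-r) s := by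
      simpa using ((hasDerivAt_id s).mul_const r).const_sub 1
    have := h1.rpow_const (p := -α) (Or.inl (hpos s hs).ne')
    convert this using 1
    simp only [hb]
    ring
  have hbcont : ContinuousOn b (Set.Icc (0:ℝ) 1) := by
    apply ContinuousOn.mul continuousOn_const
    intro s hs
    apply ContinuousAt.continuousWithinAt
    apply ContinuousAt.rpow_const
    · exact ((continuousAt_id.mul continuousAt_const).const_sub 1)
    · exact Or.inl (hpos s hs).ne'
  have hbint : IntervalIntegrable b MeasureTheory.volume 0 1 := by
    apply ContinuousOn.intervalIntegrable; rwa [huIcc]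
  have hbftc : ∫ s in (0:ℝ)..1, b s = (1 - r) ^ (-α) - 1 := by
    rw [intervalIntegral.integral_eq_sub_of_hasDerivAt (fun s hs => hbderiv s (huIcc ▸ hs)) hbint]
    norm_num
  have hpt : ∀ s ∈ Set.Icc (0:ℝ) 1, ‖g' s‖ ≤ b s := by
    intro s hs
    have h1 : ‖(1 - (s:ℂ)*u) ^ (-(α:ℂ) - 1)‖ = ‖1 - (s:ℂ)*u‖ ^ (-α - 1) := by
      have he : (-(α:ℂ) - 1) = ((-α - 1 : ℝ) : ℂ) := by push_cast; ring
      rw [he, Complex.norm_cpow_real]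
    have h2 : 1 - s * r ≤ ‖1 - (s:ℂ)*u‖ := by
      have h4 := norm_add_le (1 - (s:ℂ)*u) ((s:ℂ)*u)
      rw [sub_add_cancel, norm_one, habs s hs] at h4
      linarith
    have h3 : ‖1 - (s:ℂ)*u‖ ^ (-α - 1) ≤ (1 - s*r) ^ (-α - 1) :=
      Real.rpow_le_rpow_of_nonpos (hpos s hs) h2 (by linarith)
    have h5 : ‖g' s‖ = α * r * ‖(1 - (s:ℂ)*u) ^ (-(α:ℂ) - 1)‖ := by
      simp only [hg', norm_mul, Complex.norm_real, Real.norm_eq_abs, _root_.abs_of_pos hα,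
        ← hrdef]
    rw [h5, h1]
    exact mul_le_mul_of_nonneg_left h3 (by positivity)
  calc ‖(1 - u) ^ (-(α:ℂ)) - 1‖ = ‖∫ s in (0:ℝ)..1, g' s‖ := by
        rw [hftc]
    _ ≤ ∫ s in (0:ℝ)..1, ‖g' s‖ := intervalIntegral.norm_integral_le_integral_norm zero_le_one
    _ ≤ ∫ s in (0:ℝ)..1, b s := by
        apply intervalIntegral.integral_mono_on zero_le_one _ hbint hpt
        apply ContinuousOn.intervalIntegrable
        rw [huIcc]
        exact hcont'.norm
    _ = (1 - r) ^ (-α) - 1 := hbftc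


lemma aux_poisson_antideriv {r : ℝ} (h0 : 0 ≤ r) (h1 : r < 1) (s : ℝ) :
    HasDerivAt (fun s : ℝ => s + 2 * Real.arctan (r * Real.sin s / (1 - r * Real.cos s)))
      ((1 - r^2) / (1 - 2*r*Real.cos s + r^2)) s := by
  have hc : 0 < 1 - r * Real.cos s := by
    nlinarith [Real.neg_one_le_cos s, Real.cos_le_one s]
  have hD : 0 < 1 - 2*r*Real.cos s + r^2 := by
    nlinarith [Real.neg_one_le_cos s, Real.cos_le_one s]
  have hnum : HasDerivAt (fun s : ℝ => r * Real.sin s) (r * Real.cos s) s :=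
    (Real.hasDerivAt_sin s).const_mul r
  have hden : HasDerivAt (fun s : ℝ => 1 - r * Real.cos s) (r * Real.sin s) s := by
    simpa using ((Real.hasDerivAt_cos s).const_mul r).const_sub 1
  have hv : HasDerivAt (fun s : ℝ => r * Real.sin s / (1 - r * Real.cos s))
      ((r * Real.cos s * (1 - r * Real.cos s) - r * Real.sin s * (r * Real.sin s)) /
        (1 - r * Real.cos s)^2) s := hnum.div hden hc.ne'
  have harctan := (Real.hasDerivAt_arctan (r * Real.sin s / (1 - r * Real.cos s))).comp s hv
  have hfull := (hasDerivAt_id s).add (harctan.const_mul 2)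
  refine hfull.congr_deriv ?_
  symm
  have hsc : Real.sin s ^ 2 = 1 - Real.cos s ^ 2 := by
    have := Real.sin_sq_add_cos_sq s; linarith
  have h1v : 1 + (r * Real.sin s / (1 - r * Real.cos s))^2
      = (1 - 2*r*Real.cos s + r^2) / (1 - r * Real.cos s)^2 := by
    field_simp
    nlinarith [hsc]
  rw [h1v]
  have hcne : (1 - r * Real.cos s) ≠ 0 := hc.ne'
  have e : 1 / ((1 - 2*r*Real.cos s + r^2) / (1 - r * Real.cos s)^2) *
      ((r * Real.cos s * (1 - r * Real.cos s) - r * Real.sin s * (r * Real.sin s)) /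
        (1 - r * Real.cos s)^2)
      = (r * Real.cos s * (1 - r * Real.cos s) - r * Real.sin s * (r * Real.sin s)) /
        (1 - 2*r*Real.cos s + r^2) := by
    field_simp
  rw [e, div_eq_iff hD.ne', add_mul, one_mul, mul_assoc (2:ℝ) (_ / _), div_mul_cancel₀ _ hD.ne']
  linear_combination 2*r^2*hsc

lemma aux_heinz {r : ℝ} (h0 : 0 ≤ r) (h1 : r < 1) :
    ∫ s in (-(π/2))..(3*π/2),
      |(1 - r^2)/(1 - 2*r*Real.cos s + r^2) - (1 - r^2)/(1 + r^2)| = 8 * Real.arctan r := by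
  set c₀ : ℝ := (1 - r^2)/(1 + r^2) with hc₀
  set k : ℝ → ℝ := fun s => (1 - r^2)/(1 - 2*r*Real.cos s + r^2) with hk
  set G : ℝ → ℝ := fun s => s + 2 * Real.arctan (r * Real.sin s / (1 - r * Real.cos s)) with hG
  have hD : ∀ s : ℝ, 0 < 1 - 2*r*Real.cos s + r^2 := by
    intro s; nlinarith [Real.neg_one_le_cos s, Real.cos_le_one s]
  have hr2 : 0 < 1 - r^2 := by nlinarith
  have hkcont : Continuous k := by
    apply continuous_const.div
    · continuity
    · intro s; exact (hD s).ne'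
  have hkint : ∀ a b : ℝ, IntervalIntegrable k MeasureTheory.volume a b :=
    fun a b => hkcont.intervalIntegrable a b
  have habsint : ∀ a b : ℝ, IntervalIntegrable (fun s => |k s - c₀|) MeasureTheory.volume a b :=
    fun a b => ((hkcont.sub continuous_const).abs).intervalIntegrable a b
  have hkftc : ∀ a b : ℝ, ∫ s in a..b, k s = G b - G a := by
    intro a b
    exact intervalIntegral.integral_eq_sub_of_hasDerivAt
      (fun s _ => aux_poisson_antideriv h0 h1 s) (hkint a b)
  have hsign : ∀ s : ℝ, 0 ≤ Real.cos s → c₀ ≤ k s := by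
    intro s hcos
    apply div_le_div_of_nonneg_left hr2.le (hD s)
    nlinarith
  have hsign' : ∀ s : ℝ, Real.cos s ≤ 0 → k s ≤ c₀ := by
    intro s hcos
    apply div_le_div_of_nonneg_left hr2.le (by positivity)
    nlinarith
  have hGpi2 : G (π/2) = π/2 + 2 * Real.arctan r := by
    simp [hG, Real.sin_pi_div_two, Real.cos_pi_div_two]
  have hGneg : G (-(π/2)) = -(π/2) - 2 * Real.arctan r := by
    simp [hG, Real.sin_pi_div_two, Real.cos_pi_div_two, Real.arctan_neg]
    ring
  have hG3pi2 : G (3*π/2) = 3*π/2 - 2 * Real.arctan r := by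
    have h3 : (3*π/2 : ℝ) = π/2 + π := by ring
    rw [hG]
    simp only [h3, Real.sin_add_pi, Real.cos_add_pi, Real.sin_pi_div_two, Real.cos_pi_div_two]
    rw [show r * -1 / (1 - r * -0) = -r by ring_nf, Real.arctan_neg]
    ring
  have hpart1 : ∫ s in (-(π/2))..(π/2), |k s - c₀| = π + 4 * Real.arctan r - π * c₀ := by
    have hcongr : ∫ s in (-(π/2))..(π/2), |k s - c₀| = ∫ s in (-(π/2))..(π/2), (k s - c₀) := by
      apply intervalIntegral.integral_congr
      intro s hs
      rw [Set.uIcc_of_le (by linarith [Real.pi_pos])] at hs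
      exact abs_of_nonneg (by linarith [hsign s (Real.cos_nonneg_of_mem_Icc hs)])
    rw [hcongr, intervalIntegral.integral_sub (hkint _ _) (intervalIntegrable_const),
      hkftc, hGpi2, hGneg, intervalIntegral.integral_const]
    simp only [smul_eq_mul]
    ring
  have hpart2 : ∫ s in (π/2)..(3*π/2), |k s - c₀| = π * c₀ - (π - 4 * Real.arctan r) := by
    have hcongr : ∫ s in (π/2)..(3*π/2), |k s - c₀| = ∫ s in (π/2)..(3*π/2), (c₀ - k s) := by
      apply intervalIntegral.integral_congr
      intro s hs
      rw [Set.uIcc_of_le (by linarith [Real.pi_pos])] at hs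
      have hcos : Real.cos s ≤ 0 := by
        apply Real.cos_nonpos_of_pi_div_two_le_of_le hs.1
        linarith [hs.2]
      have h5 : k s ≤ c₀ := hsign' s hcos
      show |k s - c₀| = c₀ - k s
      rw [abs_of_nonpos (by linarith)]
      ring
    rw [hcongr, intervalIntegral.integral_sub (intervalIntegrable_const) (hkint _ _),
      hkftc, hGpi2, hG3pi2, intervalIntegral.integral_const]
    simp only [smul_eq_mul]
    ring
  have := intervalIntegral.integral_add_adjacent_intervals (a := -(π/2)) (b := π/2) (c := 3*π/2)
    (habsint _ _) (habsint _ _)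
  rw [← this, hpart1, hpart2]
  ring

lemma aux_kernel_decomp {α : ℝ} (hα : 0 < α) {w : ℂ} (hw : ‖w‖ < 1) :
    ‖poissonKernelAlpha α w -
        (((1 - ‖w‖ ^ 2) ^ (α + 1) / (1 + ‖w‖ ^ 2) : ℝ) : ℂ)‖ ≤
      2 ^ α * |(1 - ‖w‖ ^ 2) / Complex.normSq (1 - w)
          - (1 - ‖w‖ ^ 2) / (1 + ‖w‖ ^ 2)|
        + ((1 + ‖w‖) ^ α - (1 - ‖w‖ ^ 2) ^ α) := by
  set r := ‖w‖ with hrdef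
  have hr0 : 0 ≤ r := norm_nonneg w
  have hr2 : 0 < 1 - r^2 := by nlinarith
  have hr1' : 0 < 1 - r := by nlinarith
  set u := (starRingEnd ℂ) w with hu
  have habsu : ‖u‖ = r := Complex.norm_conj w
  have h1w : (1:ℂ) - w ≠ 0 := by
    intro h
    have : w = 1 := by linear_combination -h
    rw [this] at hrdef; simp at hrdef; rw [hrdef] at hr2; norm_num at hr2
  have h1u : (1:ℂ) - u ≠ 0 := by
    intro h
    have : u = 1 := by linear_combination -h
    rw [this] at habsu; simp at habsu; rw [← habsu] at hr2; norm_num at hr2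
  have hXne : (1-u)^(α:ℂ) ≠ 0 := by
    rw [Ne, Complex.cpow_eq_zero_iff]
    intro ⟨h, _⟩; exact h1u h
  set A : ℝ := (1 - r^2)^α with hA
  have hA0 : 0 ≤ A := Real.rpow_nonneg hr2.le α
  set q : ℂ := (A:ℂ) * (1-u)^(-(α:ℂ)) with hq
  set K : ℝ := (1 - r^2)/Complex.normSq (1-w) with hK
  set c₀ : ℝ := (1-r^2)/(1+r^2) with hc₀
  have hAiden : A * (1-r)^(-α) = (1+r)^α := by
    rw [hA, Real.rpow_neg hr1'.le, show (1-r^2 : ℝ) = (1-r)*(1+r) by ring,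
      Real.mul_rpow hr1'.le (by linarith)]
    field_simp
  have hnum_r : (1-r^2)^(α+1) = A * (1-r^2) := by
    rw [Real.rpow_add hr2, Real.rpow_one, hA]
  have hnum : (((1-r^2)^(α+1):ℝ):ℂ) = (A:ℂ) * ((1-r^2:ℝ):ℂ) := by
    rw [hnum_r]; push_cast; ring
  have hden : (1-u)^((α:ℂ)+1) = (1-u)^(α:ℂ) * (1-u) := by
    rw [Complex.cpow_add _ _ h1u, Complex.cpow_one]
  have hns : ((Complex.normSq (1-w) : ℝ):ℂ) = (1-w) * (1-u) := by
    rw [← Complex.mul_conj]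
    congr 1
    simp [hu]
  have key1 : poissonKernelAlpha α w = q * ((K:ℝ):ℂ) := by
    rw [poissonKernelAlpha, ← hrdef, hnum, hden, hq, hK, Complex.ofReal_div, hns,
      Complex.cpow_neg]
    field_simp [h1w, h1u, hXne]
    all_goals try ring
    all_goals simp
  have hcid : (((1 - r ^ 2) ^ (α + 1) / (1 + r ^ 2) : ℝ) : ℂ) = (c₀:ℂ) * (A:ℂ) := by
    rw [← Complex.ofReal_mul]
    congr 1
    rw [hnum_r, hc₀, hA]
    ring
  have hdecomp : poissonKernelAlpha α w - (((1 - r ^ 2) ^ (α + 1) / (1 + r ^ 2) : ℝ) : ℂ)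
      = q * ((K:ℂ) - (c₀:ℂ)) + (c₀:ℂ) * (q - (A:ℂ)) := by
    rw [key1, hcid]; ring
  have habsq : ‖q‖ ≤ 2^α := by
    rw [hq, norm_mul, Complex.norm_real, Real.norm_eq_abs, _root_.abs_of_nonneg hA0]
    have h1 : ‖(1-u)^(-(α:ℂ))‖ = ‖1-u‖ ^ (-α) := by
      rw [show (-(α:ℂ)) = ((-α : ℝ):ℂ) by push_cast; ring, Complex.norm_cpow_real]
    rw [h1]
    have h2 : 1 - r ≤ ‖1-u‖ := by
      have h4 := norm_add_le (1 - u) u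
      rw [sub_add_cancel, norm_one, habsu] at h4
      linarith
    have h3 : ‖1-u‖ ^ (-α) ≤ (1-r) ^ (-α) :=
      Real.rpow_le_rpow_of_nonpos hr1' h2 (by linarith)
    calc A * ‖1-u‖ ^ (-α) ≤ A * (1-r)^(-α) :=
          mul_le_mul_of_nonneg_left h3 hA0
      _ = (1+r)^α := hAiden
      _ ≤ 2^α := Real.rpow_le_rpow (by linarith) (by linarith) hα.le
  have habsqA : ‖q - (A:ℂ)‖ ≤ (1+r)^α - A := by
    have h1 : q - (A:ℂ) = (A:ℂ) * ((1-u)^(-(α:ℂ)) - 1) := by rw [hq]; ring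
    rw [h1, norm_mul, Complex.norm_real, Real.norm_eq_abs, _root_.abs_of_nonneg hA0]
    have h2 := aux_cpow_sub_one hα (u := u) (by rw [habsu]; exact hw)
    rw [habsu] at h2
    calc A * ‖(1-u)^(-(α:ℂ)) - 1‖ ≤ A * ((1-r)^(-α) - 1) :=
          mul_le_mul_of_nonneg_left h2 hA0
      _ = (1+r)^α - A := by rw [mul_sub, hAiden, mul_one]
  have hc₀1 : |c₀| ≤ 1 := by
    rw [_root_.abs_of_nonneg (div_nonneg hr2.le (by positivity))]
    rw [div_le_one (by positivity)]
    nlinarith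
  clear_value q A K c₀
  calc ‖poissonKernelAlpha α w - (((1 - r ^ 2) ^ (α + 1) / (1 + r ^ 2) : ℝ) : ℂ)‖
      = ‖q * ((K:ℂ) - (c₀:ℂ)) + (c₀:ℂ) * (q - (A:ℂ))‖ := by rw [hdecomp]
    _ ≤ ‖q * ((K:ℂ) - (c₀:ℂ))‖ + ‖(c₀:ℂ) * (q - (A:ℂ))‖ :=
        norm_add_le _ _
    _ = ‖q‖ * |K - c₀| + |c₀| * ‖q - (A:ℂ)‖ := by
        rw [norm_mul, norm_mul, ← Complex.ofReal_sub, Complex.norm_real, Real.norm_eq_abs, Complex.norm_real, Real.norm_eq_abs]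
    _ ≤ 2^α * |K - c₀| + 1 * ((1+r)^α - A) := by
        apply add_le_add
        · exact mul_le_mul_of_nonneg_right habsq (abs_nonneg _)
        · apply mul_le_mul hc₀1 habsqA (norm_nonneg _) zero_le_one
    _ = 2^α * |K - c₀| + ((1+r)^α - A) := by ring

lemma aux_normSq_one_sub (r s : ℝ) :
    Complex.normSq (1 - (r:ℂ) * Complex.exp ((s:ℂ) * Complex.I)) = 1 - 2*r*Real.cos s + r^2 := by
  rw [Complex.exp_mul_I]
  simp [Complex.normSq_apply, Complex.cos_ofReal_re, Complex.sin_ofReal_re]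
  nlinarith [Real.sin_sq_add_cos_sq s]

lemma aux_main {α : ℝ} (hα : 0 < α) (fs : ℝ → ℂ) (hcont : Continuous fs)
    (hbd : ∀ t : ℝ, ‖fs t‖ ≤ 1) {z : ℂ} (hz : ‖z‖ < 1) :
    ‖poissonExt α fs z -
        ((((1 - ‖z‖ ^ 2) ^ (α + 1) / (1 + ‖z‖ ^ 2) : ℝ)) : ℂ) *
          poissonExt α fs 0‖ ≤
      (2:ℝ) ^ (α + 1) * (2 / Real.pi * Real.arctan (‖z‖))
        + ((1 + ‖z‖) ^ α - (1 - ‖z‖ ^ 2) ^ α) := by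
  have hπ : (0:ℝ) < π := Real.pi_pos
  set r := ‖z‖ with hrdef
  have hr0 : 0 ≤ r := norm_nonneg z
  have hr2 : 0 < 1 - r^2 := by nlinarith
  set θ := Complex.arg z with hθ
  set w : ℝ → ℂ := fun t => z * Complex.exp (-Complex.I * t) with hw
  have habsw : ∀ t : ℝ, ‖w t‖ = r := by
    intro t
    rw [hw]
    simp [Complex.norm_exp, hrdef]
  have hwlt : ∀ t : ℝ, ‖w t‖ < 1 := fun t => by rw [habsw t]; exact hz
  -- continuity of the kernel composed with w
  have hcontw : Continuous w := by
    apply continuous_const.mul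
    exact Complex.continuous_exp.comp (continuous_const.mul Complex.continuous_ofReal)
  have hslit : ∀ t : ℝ, (1 - (starRingEnd ℂ) (w t)) ∈ Complex.slitPlane := by
    intro t
    apply Complex.mem_slitPlane_iff.mpr
    left
    have h1 : |((starRingEnd ℂ) (w t)).re| ≤ r := by
      rw [← habsw t, ← Complex.norm_conj (w t)]
      exact Complex.abs_re_le_norm _
    simp only [Complex.sub_re, Complex.one_re]
    cases' abs_le.mp h1 with h3 h4
    linarith
  have hne1 : ∀ t : ℝ, (1:ℂ) - w t ≠ 0 := by
    intro t h
    have : w t = 1 := by linear_combination -h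
    have h2 := habsw t
    rw [this] at h2; simp at h2; rw [← h2] at hr2; norm_num at hr2
  have hnec : ∀ t : ℝ, (1 - (starRingEnd ℂ) (w t)) ^ ((α:ℂ) + 1) ≠ 0 := by
    intro t
    rw [Ne, Complex.cpow_eq_zero_iff]
    intro ⟨h, _⟩
    exact Complex.slitPlane_ne_zero (hslit t) h
  have hPcont : Continuous (fun t => poissonKernelAlpha α (w t)) := by
    simp only [poissonKernelAlpha]
    apply Continuous.div
    · apply Complex.continuous_ofReal.comp
      apply Continuous.rpow_const
      · exact (continuous_const.sub ((continuous_norm.comp hcontw).pow 2))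
      · intro t; right; linarith
    · apply Continuous.mul (continuous_const.sub hcontw)
      apply Continuous.cpow
      · exact continuous_const.sub ((Complex.continuous_conj).comp hcontw)
      · exact continuous_const
      · exact fun t => hslit t
    · intro t
      exact mul_ne_zero (hne1 t) (hnec t)
  -- constants
  set c : ℝ := (1 - r ^ 2) ^ (α + 1) / (1 + r ^ 2) with hc
  set c₀ : ℝ := (1 - r^2)/(1 + r^2) with hc₀
  set M : ℝ := (1 + r) ^ α - (1 - r ^ 2) ^ α with hM
  set φ : ℝ → ℝ := fun s => |(1 - r^2)/(1 - 2*r*Real.cos s + r^2) - c₀| with hφ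
  have hDpos : ∀ s : ℝ, 0 < 1 - 2*r*Real.cos s + r^2 := by
    intro s; nlinarith [Real.neg_one_le_cos s, Real.cos_le_one s]
  have hφcont : Continuous φ := by
    apply Continuous.abs
    apply Continuous.sub _ continuous_const
    apply continuous_const.div
    · continuity
    · exact fun s => (hDpos s).ne'
  -- poissonExt at 0
  have hext0 : poissonExt α fs 0 = (1 / (2 * Real.pi) : ℂ) * ∫ t in (0:ℝ)..(2*π), fs t := by
    rw [poissonExt]
    congr 1
    apply intervalIntegral.integral_congr
    intro t _
    simp [poissonKernelAlpha, Real.one_rpow]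
  -- integrabilities
  have hint1 : IntervalIntegrable (fun t => poissonKernelAlpha α (w t) * fs t)
      MeasureTheory.volume 0 (2*π) := (hPcont.mul hcont).intervalIntegrable _ _
  have hint2 : IntervalIntegrable (fun t => (c:ℂ) * fs t) MeasureTheory.volume 0 (2*π) :=
    (continuous_const.mul hcont).intervalIntegrable _ _
  have hdiff : poissonExt α fs z - (c:ℂ) * poissonExt α fs 0
      = (1 / (2 * Real.pi) : ℂ) *
          ∫ t in (0:ℝ)..(2*π), (poissonKernelAlpha α (w t) - (c:ℂ)) * fs t := by
    have h0 : (c:ℂ) * poissonExt α fs 0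
        = (1 / (2 * Real.pi) : ℂ) * ∫ t in (0:ℝ)..(2*π), (c:ℂ) * fs t := by
      rw [hext0, intervalIntegral.integral_const_mul]
      ring
    rw [poissonExt, h0, ← mul_sub]
    congr 1
    show (∫ t in (0:ℝ)..(2*π), poissonKernelAlpha α (w t) * fs t)
        - (∫ t in (0:ℝ)..(2*π), (c:ℂ) * fs t) = _
    rw [← intervalIntegral.integral_sub hint1 hint2]
    apply intervalIntegral.integral_congr
    intro t _
    show poissonKernelAlpha α (w t) * fs t - (c:ℂ) * fs t = (poissonKernelAlpha α (w t) - (c:ℂ)) * fs t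
    ring
  -- normSq identity
  have hnormsq : ∀ t : ℝ, Complex.normSq (1 - w t) = 1 - 2*r*Real.cos (θ - t) + r^2 := by
    intro t
    have hz1 : (↑r : ℂ) * Complex.exp (↑θ * Complex.I) = z := Complex.norm_mul_exp_arg_mul_I z
    have hzeq : w t = (r:ℂ) * Complex.exp (((θ - t : ℝ):ℂ) * Complex.I) := by
      calc w t = z * Complex.exp (-Complex.I * t) := rfl
        _ = ↑r * Complex.exp (↑θ * Complex.I) * Complex.exp (-Complex.I * t) := by rw [hz1]
        _ = ↑r * Complex.exp (↑θ * Complex.I + -Complex.I * t) := by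
            rw [mul_assoc, Complex.exp_add]
        _ = (r:ℂ) * Complex.exp (((θ - t : ℝ):ℂ) * Complex.I) := by
            congr 1
            push_cast
            ring
    rw [hzeq]
    exact aux_normSq_one_sub r (θ - t)
  -- pointwise bound
  have hptw : ∀ t : ℝ, ‖(poissonKernelAlpha α (w t) - (c:ℂ)) * fs t‖
      ≤ 2^α * φ (θ - t) + M := by
    intro t
    rw [norm_mul]
    have h1 := aux_kernel_decomp hα (hwlt t)
    rw [habsw t, hnormsq t] at h1
    calc ‖poissonKernelAlpha α (w t) - (c:ℂ)‖ * ‖fs t‖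
        ≤ ‖poissonKernelAlpha α (w t) - (c:ℂ)‖ * 1 :=
          mul_le_mul_of_nonneg_left (hbd t) (norm_nonneg _)
      _ = ‖poissonKernelAlpha α (w t) - (c:ℂ)‖ := mul_one _
      _ ≤ 2^α * φ (θ - t) + M := h1
  -- integral of the bound
  have hφper : Function.Periodic φ (2*π) := by
    intro s
    simp only [hφ, Real.cos_add_two_pi]
  have hshift : ∫ t in (0:ℝ)..(2*π), φ (θ - t) = 8 * Real.arctan r := by
    have h1 : ∫ t in (0:ℝ)..(2*π), φ (θ - t) = ∫ s in (θ - 2*π)..θ, φ s := by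
      simpa using intervalIntegral.integral_comp_sub_left (a := (0:ℝ)) (b := 2*π) φ θ
    have h2 := hφper.intervalIntegral_add_eq (θ - 2*π) (-(π/2))
    rw [show θ - 2*π + 2*π = θ by ring, show -(π/2) + 2*π = 3*π/2 by ring] at h2
    rw [h1, h2]
    exact aux_heinz hr0 hz
  have hboundint : IntervalIntegrable (fun t => 2^α * φ (θ - t) + M)
      MeasureTheory.volume 0 (2*π) := by
    apply IntervalIntegrable.add _ intervalIntegrable_const
    exact (continuous_const.mul (hφcont.comp (continuous_const.sub continuous_id))).intervalIntegrable _ _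
  have hnormint : IntervalIntegrable (fun t => ‖(poissonKernelAlpha α (w t) - (c:ℂ)) * fs t‖)
      MeasureTheory.volume 0 (2*π) :=
    (((hPcont.sub continuous_const).mul hcont).norm).intervalIntegrable _ _
  have hintbound : ∫ t in (0:ℝ)..(2*π), (2^α * φ (θ - t) + M)
      = 2^α * (8 * Real.arctan r) + 2*π*M := by
    rw [intervalIntegral.integral_add _ intervalIntegrable_const,
      intervalIntegral.integral_const_mul, hshift, intervalIntegral.integral_const]
    · simp only [smul_eq_mul]
      ring
    · exact (continuous_const.mul (hφcont.comp (continuous_const.sub continuous_id))).intervalIntegrable _ _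
  have habs2pi : ‖(1 / (2 * Real.pi) : ℂ)‖ = 1/(2*π) := by
    have he : ((1 / (2*Real.pi) : ℝ) : ℂ) = (1 / (2 * Real.pi) : ℂ) := by push_cast; ring
    rw [← he, Complex.norm_real, Real.norm_eq_abs, _root_.abs_of_pos (by positivity)]
  calc ‖poissonExt α fs z - (c:ℂ) * poissonExt α fs 0‖
      = 1/(2*π) * ‖∫ t in (0:ℝ)..(2*π), (poissonKernelAlpha α (w t) - (c:ℂ)) * fs t‖ := by
        rw [hdiff, norm_mul, habs2pi]
    _ ≤ 1/(2*π) * (2^α * (8 * Real.arctan r) + 2*π*M) := by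
        apply mul_le_mul_of_nonneg_left _ (by positivity)
        rw [← hintbound]
        calc ‖∫ t in (0:ℝ)..(2*π), (poissonKernelAlpha α (w t) - (c:ℂ)) * fs t‖
            ≤ ∫ t in (0:ℝ)..(2*π), ‖(poissonKernelAlpha α (w t) - (c:ℂ)) * fs t‖ := by
              exact intervalIntegral.norm_integral_le_integral_norm (by positivity)
          _ ≤ ∫ t in (0:ℝ)..(2*π), (2^α * φ (θ - t) + M) := by
              apply intervalIntegral.integral_mono_on (by positivity) hnormint hboundint
              intro t _
              exact hptw t
    _ = (2:ℝ)^(α+1) * (2 / Real.pi * Real.arctan r) + M := by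
        rw [Real.rpow_add (by norm_num : (0:ℝ) < 2) α 1, Real.rpow_one]
        field_simp
        ring


lemma aux_rpow_subadd {x y p : ℝ} (hx : 0 ≤ x) (hy : 0 ≤ y) (hp0 : 0 ≤ p) (hp1 : p ≤ 1) :
    (x + y)^p ≤ x^p + y^p := by
  have h := NNReal.rpow_add_le_add_rpow x.toNNReal y.toNNReal hp0 hp1
  rw [← NNReal.coe_le_coe] at h
  push_cast at h
  rwa [Real.coe_toNNReal x hx, Real.coe_toNNReal y hy] at h

lemma aux_M_case1 {α r : ℝ} (hα : 0 < α) (hα1 : α ≤ 1) (hr0 : 0 ≤ r) (hr1 : r < 1) :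
    (1 + r)^α - (1 - r^2)^α ≤ 2^(α+1) * r^α := by
  have h0 : ((1 - r^2) + r*(1+r))^α ≤ (1-r^2)^α + (r*(1+r))^α :=
    aux_rpow_subadd (by nlinarith) (by positivity) hα.le hα1
  rw [show (1 - r^2) + r*(1+r) = 1 + r by ring] at h0
  have h3 : (r*(1+r))^α ≤ (2*r)^α := Real.rpow_le_rpow (by positivity) (by nlinarith) hα.le
  have h4 : ((2:ℝ)*r)^α = 2^α * r^α := Real.mul_rpow (by norm_num) hr0
  have h5 : (2:ℝ)^α ≤ 2^(α+1) := Real.rpow_le_rpow_of_exponent_le (by norm_num) (by linarith)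
  have h6 : 2^α * r^α ≤ 2^(α+1) * r^α :=
    mul_le_mul_of_nonneg_right h5 (Real.rpow_nonneg hr0 α)
  nlinarith [h0, h3, h4, h6]

lemma aux_M_case2 {α r : ℝ} (hα1 : 1 ≤ α) (hr0 : 0 ≤ r) (hr1 : r < 1) :
    (1 + r)^α - (1 - r^2)^α ≤ 2^(α+1) * (α * r) := by
  have hα0 : (0:ℝ) < α := lt_of_lt_of_le one_pos hα1
  set x : ℝ := (1+r)/2 with hxd
  set y : ℝ := (1-r^2)/2 with hyd
  have hx0 : 0 < x := by rw [hxd]; positivity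
  have hx1 : x ≤ 1 := by rw [hxd]; linarith
  have hy0 : 0 ≤ y := by rw [hyd]; nlinarith
  have hyx : y ≤ x := by rw [hxd, hyd]; nlinarith
  have hs : -1 ≤ y/x - 1 := by
    have : 0 ≤ y/x := div_nonneg hy0 hx0.le
    linarith
  have hB := one_add_mul_self_le_rpow_one_add hs hα1
  rw [show (1:ℝ) + (y/x - 1) = y/x by ring, Real.div_rpow hy0 hx0.le] at hB
  have hxa : 0 < x^α := Real.rpow_pos_of_pos hx0 α
  have h2 : x^α * (1 + α*(y/x - 1)) ≤ y^α := by
    calc x^α * (1 + α*(y/x-1)) ≤ x^α * (y^α/x^α) := mul_le_mul_of_nonneg_left hB hxa.le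
      _ = y^α := by field_simp
  have h3 : x^α - y^α ≤ α * x^(α-1) * (x - y) := by
    have hxam : x^(α-1) = x^α / x := by rw [Real.rpow_sub hx0, Real.rpow_one]
    rw [hxam]
    have hexp : α * (x^α/x) * (x-y) = x^α*(α*(1 - y/x)) := by field_simp
    rw [hexp]
    nlinarith [h2]
  have h4 : x^(α-1) ≤ 1 := Real.rpow_le_one hx0.le hx1 (by linarith)
  have h5 : x - y ≤ r := by rw [hxd, hyd]; nlinarith
  have h6 : x^α - y^α ≤ α * r := by
    calc x^α - y^α ≤ α * x^(α-1) * (x-y) := h3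
      _ ≤ (α * 1) * r := by
          apply mul_le_mul (mul_le_mul_of_nonneg_left h4 hα0.le) h5 (by linarith) (by positivity)
      _ = α * r := by ring
  have h7 : (1+r)^α = 2^α * x^α := by
    rw [show (1+r:ℝ) = 2*x by rw [hxd]; ring, Real.mul_rpow (by norm_num) hx0.le]
  have h8 : (1-r^2)^α = 2^α * y^α := by
    rw [show (1-r^2:ℝ) = 2*y by rw [hyd]; ring, Real.mul_rpow (by norm_num) hy0]
  have h9 : (2:ℝ)^α ≤ 2^(α+1) := Real.rpow_le_rpow_of_exponent_le (by norm_num) (by linarith)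
  calc (1+r)^α - (1-r^2)^α = 2^α*(x^α - y^α) := by rw [h7, h8]; ring
    _ ≤ 2^α * (α*r) := mul_le_mul_of_nonneg_left h6 (by positivity)
    _ ≤ 2^(α+1) * (α*r) :=
        mul_le_mul_of_nonneg_right h9 (mul_nonneg hα0.le hr0)

/-- Corollary of the Schwarz-type lemma: for `f = P_α[f*]` with `|f*| ≤ 1`,
if `0 < α ≤ 1` then `|f(z) - ((1-|z|²)^{α+1}/(1+|z|²)) f(0)| ≤ 2^{α+1}((2/π)arctan|z| + |z|^α)`,
and if `α ≥ 1` then `|f(z) - ((1-|z|²)^{α+1}/(1+|z|²)) f(0)| ≤ 2^{α+1}((2/π)arctan|z| + α|z|)`. -/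
theorem schwarz_alpha_cor (α : ℝ) (fs : ℝ → ℂ) (hcont : Continuous fs)
    (hper : Function.Periodic fs (2 * Real.pi)) (hbd : ∀ t : ℝ, ‖fs t‖ ≤ 1) :
    (0 < α → α ≤ 1 →
        ∀ z ∈ Metric.ball (0 : ℂ) 1,
          ‖poissonExt α fs z -
              ((((1 - ‖z‖ ^ 2) ^ (α + 1) / (1 + ‖z‖ ^ 2) : ℝ)) : ℂ) *
                poissonExt α fs 0‖ ≤
            (2 : ℝ) ^ (α + 1) *
              (2 / Real.pi * Real.arctan (‖z‖) + ‖z‖ ^ α)) ∧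
      (1 ≤ α →
        ∀ z ∈ Metric.ball (0 : ℂ) 1,
          ‖poissonExt α fs z -
              ((((1 - ‖z‖ ^ 2) ^ (α + 1) / (1 + ‖z‖ ^ 2) : ℝ)) : ℂ) *
                poissonExt α fs 0‖ ≤
            (2 : ℝ) ^ (α + 1) *
              (2 / Real.pi * Real.arctan (‖z‖) + α * ‖z‖)) := by
  constructor
  · intro hα hα1 z hz
    have hz' : ‖z‖ < 1 := by
      rwa [mem_ball_zero_iff] at hz
    have h1 := aux_main hα fs hcont hbd hz'
    have h2 := aux_M_case1 hα hα1 (norm_nonneg z) hz'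
    refine le_trans h1 ?_
    rw [mul_add]
    linarith
  · intro hα1 z hz
    have hα : 0 < α := lt_of_lt_of_le one_pos hα1
    have hz' : ‖z‖ < 1 := by
      rwa [mem_ball_zero_iff] at hz
    have h1 := aux_main hα fs hcont hbd hz'
    have h2 := aux_M_case2 hα1 (norm_nonneg z) hz'
    refine le_trans h1 ?_
    rw [mul_add]
    linarith
end
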